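/- arXiv:1609.00114 — 5 statements merged into one kernel-verified Lean document; each statement's English description precedes it below -/
import Mathlib

section
/- Let G be a connected graph on n vertices. Then e(G) ≥ 2H(G) − C(n,2), with equality if and only if the diameter of G is at most 2. -/
open SimpleGraph Finset

/-- The Wiener index: sum of distances over unordered pairs of vertices. -/
noncomputable def wienerIndex {V : Type*} [Fintype V] (G : SimpleGraph V) : ℝ :=
  (∑ u : V, ∑ v : V, (G.dist u v : ℝ)) / 2

/-- The Harary index: sum of reciprocal distances over unordered pairs of vertices. -/
noncomputable def hararyIndex {V : Type*} [Fintype V] (G : SimpleGraph V) : ℝ :=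
  (∑ u : V, ∑ v : V, ((G.dist u v : ℝ))⁻¹) / 2

/-- The number of edges of a graph. -/
noncomputable def numEdges {V : Type*} (G : SimpleGraph V) : ℕ := Nat.card G.edgeSet

/-- A graph is traceable if it has a Hamiltonian path. -/
def IsTraceable {V : Type*} [DecidableEq V] (G : SimpleGraph V) : Prop :=
  ∃ (u v : V) (p : G.Walk u v), p.IsHamiltonian

/-- The join `G ∨ H` of two graphs: disjoint union plus all edges in between. -/
def gJoin {α β : Type*} (G : SimpleGraph α) (H : SimpleGraph β) : SimpleGraph (α ⊕ β) :=
  (G ⊕g H) ⊔ completeBipartiteGraph α β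

/-- `N^k_n = K_k ∨ (K_{n-2k} + k K_1)`. -/
def graphN (n k : ℕ) : SimpleGraph (Fin k ⊕ (Fin (n - 2*k) ⊕ Fin k)) :=
  gJoin (⊤ : SimpleGraph (Fin k)) ((⊤ : SimpleGraph (Fin (n - 2*k))) ⊕g (⊥ : SimpleGraph (Fin k)))

/-- `L^k_n = K_1 ∨ (K_k + K_{n-k-1})`. -/
def graphL (n k : ℕ) : SimpleGraph (Fin 1 ⊕ (Fin k ⊕ Fin (n - k - 1))) :=
  gJoin (⊤ : SimpleGraph (Fin 1)) ((⊤ : SimpleGraph (Fin k)) ⊕g (⊤ : SimpleGraph (Fin (n - k - 1))))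

/-- `N̲^k_n = K_k ∨ (K_{n-2k-1} + (k+1) K_1)`. -/
def graphNbar (n k : ℕ) : SimpleGraph (Fin k ⊕ (Fin (n - 2*k - 1) ⊕ Fin (k + 1))) :=
  gJoin (⊤ : SimpleGraph (Fin k))
    ((⊤ : SimpleGraph (Fin (n - 2*k - 1))) ⊕g (⊥ : SimpleGraph (Fin (k + 1))))

/-- `L̲^k_n = K_{k+1} + K_{n-k-1}`. -/
def graphLbar (n k : ℕ) : SimpleGraph (Fin (k + 1) ⊕ Fin (n - k - 1)) :=
  (⊤ : SimpleGraph (Fin (k + 1))) ⊕g (⊤ : SimpleGraph (Fin (n - k - 1)))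

/-- `B^k_n`: obtained from `K_{n,n}` by deleting the edges of a complete bipartite
subgraph `K_{n-k,k}` (between the first `n-k` left vertices and first `k` right vertices). -/
def graphB (n k : ℕ) : SimpleGraph (Fin n ⊕ Fin n) where
  Adj x y := match x, y with
    | Sum.inl i, Sum.inr j => ¬(i.val < n - k ∧ j.val < k)
    | Sum.inr j, Sum.inl i => ¬(i.val < n - k ∧ j.val < k)
    | _, _ => False
  symm := ⟨by rintro (i | i) (j | j) h <;> simp_all⟩
  loopless := ⟨by rintro (i | i) h <;> simp_all⟩

/-- For a connected graph `G` on `n` vertices,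
`e(G) ≥ 2H(G) - C(n,2)`, with equality iff the diameter of `G` is at most `2`. -/
theorem edges_ge_harary {n : ℕ} (G : SimpleGraph (Fin n)) (hG : G.Connected) :
    2 * hararyIndex G - (n : ℝ) * ((n : ℝ) - 1) / 2 ≤ (numEdges G : ℝ) ∧
      ((numEdges G : ℝ) = 2 * hararyIndex G - (n : ℝ) * ((n : ℝ) - 1) / 2 ↔ G.diam ≤ 2) := by
  classical
  have hne : Nonempty (Fin n) := hG.nonempty
  set f : Fin n → Fin n → ℝ := fun u v =>
    (if G.Adj u v then 1 else 0) + (if u = v then 0 else 1) - 2 * ((G.dist u v : ℝ))⁻¹ with hf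
  have key : ∀ u v : Fin n, 0 ≤ f u v ∧ (f u v = 0 ↔ G.dist u v ≤ 2) := by
    intro u v
    by_cases huv : u = v
    · subst huv
      simp [hf, G.dist_self]
    · have hd : 0 < G.dist u v := hG.pos_dist_of_ne huv
      rcases eq_or_lt_of_le (show 1 ≤ G.dist u v from hd) with h1 | h1
      · have hadj : G.Adj u v := SimpleGraph.dist_eq_one_iff_adj.mp h1.symm
        simp only [hf, hadj, if_true, huv, if_false, ← h1]
        norm_num
      · have hnadj : ¬ G.Adj u v := fun h => by
          have := SimpleGraph.dist_eq_one_iff_adj.mpr h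
          omega
        rcases eq_or_lt_of_le (show 2 ≤ G.dist u v from h1) with h2 | h2
        · rw [hf]
          simp only [hnadj, if_false, huv, if_false, ← h2]
          norm_num
        · -- dist ≥ 3
          have h3 : (2 : ℝ) < (G.dist u v : ℝ) := by exact_mod_cast h2
          have hpos : (0 : ℝ) < (G.dist u v : ℝ) := by positivity
          have hlt : 2 * ((G.dist u v : ℝ))⁻¹ < 1 := by
            rw [mul_inv_lt_iff₀ hpos]; linarith
          constructor
          · rw [hf]; simp only [hnadj, if_false, huv, if_false]; linarith
          · constructor
            · intro h0
              rw [hf] at h0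
              simp only [hnadj, if_false, huv, if_false] at h0
              linarith
            · intro h0; omega
  have hsum_nonneg : 0 ≤ ∑ u : Fin n, ∑ v : Fin n, f u v :=
    Finset.sum_nonneg fun u _ => Finset.sum_nonneg fun v _ => (key u v).1
  -- sum identity
  have hadj_sum : ∑ u : Fin n, ∑ v : Fin n, (if G.Adj u v then (1:ℝ) else 0)
      = 2 * (numEdges G : ℝ) := by
    have h1 : ∀ u : Fin n, ∑ v : Fin n, (if G.Adj u v then (1:ℝ) else 0)
        = (G.degree u : ℝ) := by
      intro u
      rw [SimpleGraph.degree, SimpleGraph.neighborFinset_eq_filter]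
      rw [Finset.sum_boole]
    have h2 : numEdges G = #G.edgeFinset := by
      rw [numEdges, Nat.card_eq_fintype_card, SimpleGraph.edgeFinset_card]
    calc ∑ u : Fin n, ∑ v : Fin n, (if G.Adj u v then (1:ℝ) else 0)
        = ∑ u : Fin n, (G.degree u : ℝ) := by simp_rw [h1]
      _ = ((∑ u : Fin n, G.degree u : ℕ) : ℝ) := by push_cast; ring
      _ = ((2 * #G.edgeFinset : ℕ) : ℝ) := by
          rw [SimpleGraph.sum_degrees_eq_twice_card_edges]
      _ = 2 * (numEdges G : ℝ) := by rw [h2]; push_cast; ring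
  have hne_sum : ∑ u : Fin n, ∑ v : Fin n, (if u = v then (0:ℝ) else 1)
      = (n : ℝ) * ((n : ℝ) - 1) := by
    have h1 : ∀ u : Fin n, ∑ v : Fin n, (if u = v then (0:ℝ) else 1) = (n : ℝ) - 1 := by
      intro u
      have : ∑ v : Fin n, (if u = v then (0:ℝ) else 1)
          = ∑ v : Fin n, ((1:ℝ) - if u = v then 1 else 0) := by
        apply Finset.sum_congr rfl
        intro v _
        by_cases h : u = v <;> simp [h]
      rw [this, Finset.sum_sub_distrib]
      simp [Finset.sum_ite_eq]
    simp_rw [h1]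
    simp [mul_comm]
    ring
  have hS : ∑ u : Fin n, ∑ v : Fin n, f u v
      = 2 * (numEdges G : ℝ) + (n : ℝ) * ((n : ℝ) - 1) - 4 * hararyIndex G := by
    rw [hf]
    simp_rw [Finset.sum_sub_distrib, Finset.sum_add_distrib]
    rw [hadj_sum, hne_sum, hararyIndex]
    simp_rw [← Finset.mul_sum]
    ring
  have hdiam_iff : (∀ u v : Fin n, G.dist u v ≤ 2) ↔ G.diam ≤ 2 := by
    constructor
    · intro h
      obtain ⟨u, v, huv⟩ := SimpleGraph.exists_dist_eq_diam (G := G)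
      rw [← huv]; exact h u v
    · intro h u v
      have hnt : G.ediam ≠ ⊤ := by
        obtain ⟨a, b, hab⟩ := SimpleGraph.exists_edist_eq_ediam_of_finite (G := G)
        rw [← hab]
        exact SimpleGraph.edist_ne_top_iff_reachable.mpr (hG.preconnected a b)
      exact le_trans (SimpleGraph.dist_le_diam hnt) h
  constructor
  · nlinarith [hsum_nonneg, hS]
  · constructor
    · intro h
      rw [← hdiam_iff]
      intro u v
      have hzero : ∑ u : Fin n, ∑ v : Fin n, f u v = 0 := by
        rw [hS]; linarith
      have h1 := (Finset.sum_eq_zero_iff_of_nonneg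
        (fun u _ => Finset.sum_nonneg fun v _ => (key u v).1)).mp hzero u (Finset.mem_univ u)
      have h2 := (Finset.sum_eq_zero_iff_of_nonneg
        (fun v _ => (key u v).1)).mp h1 v (Finset.mem_univ v)
      exact (key u v).2.mp h2
    · intro h
      have hzero : ∑ u : Fin n, ∑ v : Fin n, f u v = 0 := by
        apply Finset.sum_eq_zero
        intro u _
        apply Finset.sum_eq_zero
        intro v _
        exact (key u v).2.mpr (hdiam_iff.mpr h u v)
      rw [hzero] at hS
      linarith
end

section
/- Let G be a graph of order n with minimum degree δ(G) ≥ k, where 1 ≤ k ≤ (n−1)/2. If e(G) > max{ C(n−k,2) + k², C(⌈(n+1)/2⌉, 2) + ⌊(n−1)/2⌋² }, then G is Hamiltonian. -/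
open SimpleGraph Finset

namespace ErdosHam

variable {n : ℕ}

/-- Build a walk following indices `a, a+1, ..., a+len`. -/
def idxWalk (G : SimpleGraph (Fin n)) (g : ℕ → Fin n) :
    (a len : ℕ) → (∀ i, a ≤ i → i < a + len → G.Adj (g i) (g (i+1))) → G.Walk (g a) (g (a + len))
  | _, 0, _ => SimpleGraph.Walk.nil
  | a, len+1, h =>
    (SimpleGraph.Walk.cons (h a le_rfl (by omega))
      (idxWalk G g (a+1) len (fun i h1 h2 => h i (by omega) (by omega)))).copy rfl
      (congrArg g (by omega))

lemma idxWalk_support (G : SimpleGraph (Fin n)) (g : ℕ → Fin n) :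
    ∀ (a len : ℕ) (h : ∀ i, a ≤ i → i < a + len → G.Adj (g i) (g (i+1))),
      (idxWalk G g a len h).support = (List.range (len+1)).map (fun i => g (a + i))
  | a, 0, h => by simp [idxWalk, List.range_succ]
  | a, len+1, h => by
    rw [idxWalk]
    rw [SimpleGraph.Walk.support_copy, SimpleGraph.Walk.support_cons,
      idxWalk_support G g (a+1) len, List.range_succ_eq_map (n := len+1),
      List.range_succ_eq_map (n := len)]
    simp only [List.map_cons, List.map_map, Nat.add_zero]
    congr 1
    congr 1
    apply List.map_congr_left
    intro i _
    show g (a + 1 + (i + 1)) = g (a + (i + 1 + 1))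
    congr 1
    omega

lemma idxWalk_edges (G : SimpleGraph (Fin n)) (g : ℕ → Fin n) :
    ∀ (a len : ℕ) (h : ∀ i, a ≤ i → i < a + len → G.Adj (g i) (g (i+1))),
      (idxWalk G g a len h).edges = (List.range len).map (fun i => s(g (a + i), g (a + i + 1)))
  | a, 0, h => by simp [idxWalk]
  | a, len+1, h => by
    rw [idxWalk]
    rw [SimpleGraph.Walk.edges_copy, SimpleGraph.Walk.edges_cons,
      idxWalk_edges G g (a+1) len, List.range_succ_eq_map (n := len)]
    simp only [List.map_cons, List.map_map, Nat.add_zero]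
    congr 1
    apply List.map_congr_left
    intro i _
    show s(g (a + 1 + i), g (a + 1 + i + 1)) = s(g (a + (i+1)), g (a + (i+1) + 1))
    have h1 : a + 1 + i = a + (i + 1) := by omega
    rw [h1]

lemma idxWalk_length (G : SimpleGraph (Fin n)) (g : ℕ → Fin n) :
    ∀ (a len : ℕ) (h : ∀ i, a ≤ i → i < a + len → G.Adj (g i) (g (i+1))),
      (idxWalk G g a len h).length = len
  | a, 0, h => rfl
  | a, len+1, h => by
    rw [idxWalk, SimpleGraph.Walk.length_copy, SimpleGraph.Walk.length_cons,
      idxWalk_length G g (a+1) len]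

/-- cyclic structure for a graph on `Fin n` -/
def IsCyc (G : SimpleGraph (Fin n)) (g : ℕ → Fin n) : Prop :=
  (∀ i < n, ∀ j < n, g i = g j → i = j) ∧ (∀ v, ∃ i < n, g i = v) ∧
    (∀ i < n, G.Adj (g i) (g ((i+1) % n)))

lemma isHamiltonian_of_cyclic (G : SimpleGraph (Fin n)) (hn : 3 ≤ n) (g : ℕ → Fin n)
    (hg : IsCyc G g) : G.IsHamiltonian := by
  obtain ⟨hinj, hsurj, hadj⟩ := hg
  have hn0 : 0 < n := by omega
  set g' : ℕ → Fin n := fun i => g (i % n) with hg'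
  have hmodinj : ∀ i j : ℕ, g' i = g' j → i % n = j % n := by
    intro i j hij
    exact hinj _ (Nat.mod_lt _ hn0) _ (Nat.mod_lt _ hn0) hij
  have hadj' : ∀ i, 0 ≤ i → i < 0 + n → G.Adj (g' i) (g' (i+1)) := by
    intro i _ hi
    have h1 : g' i = g (i % n) := rfl
    have h2 : g' (i + 1) = g ((i % n + 1) % n) := by
      show g ((i+1) % n) = _
      rw [Nat.add_mod i 1 n, Nat.mod_eq_of_lt (show 1 < n by omega)]
    rw [h1, h2]
    exact hadj (i % n) (Nat.mod_lt _ hn0)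
  have hclose : g' (0 + n) = g' 0 := by
    show g ((0 + n) % n) = g (0 % n)
    simp
  let c : G.Walk (g' 0) (g' 0) := (idxWalk G g' 0 n hadj').copy rfl hclose
  have hsupp : c.support = (List.range (n+1)).map (fun i => g' i) := by
    show ((idxWalk G g' 0 n hadj').copy rfl hclose).support = _
    rw [SimpleGraph.Walk.support_copy, idxWalk_support]
    simp
  have htail : c.support.tail = (List.range n).map (fun i => g' (i+1)) := by
    rw [hsupp, List.range_succ_eq_map, List.map_cons, List.tail_cons, List.map_map]
    rfl
  have hedges : c.edges = (List.range n).map (fun i => s(g' i, g' (i+1))) := by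
    show ((idxWalk G g' 0 n hadj').copy rfl hclose).edges = _
    rw [SimpleGraph.Walk.edges_copy, idxWalk_edges]
    simp
  -- injectivity of i ↦ g'(i+1) on range n
  have hsuccinj : ∀ i < n, ∀ j < n, g' (i+1) = g' (j+1) → i = j := by
    intro i hi j hj hij
    have := hmodinj _ _ hij
    rcases Nat.lt_or_ge (i+1) n with h | h <;> rcases Nat.lt_or_ge (j+1) n with h' | h'
    · rw [Nat.mod_eq_of_lt h, Nat.mod_eq_of_lt h'] at this; omega
    · have hj1 : j + 1 = n := by omega
      rw [Nat.mod_eq_of_lt h, hj1, Nat.mod_self] at this; omega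
    · have hi1 : i + 1 = n := by omega
      rw [Nat.mod_eq_of_lt h', hi1, Nat.mod_self] at this; omega
    · omega
  have htail_nodup : c.support.tail.Nodup := by
    rw [htail]
    exact List.Nodup.map_on
      (fun x hx y hy hxy => hsuccinj x (List.mem_range.mp hx) y (List.mem_range.mp hy) hxy)
      (List.nodup_range (n := n))
  have hcyc : c.IsCycle := by
    refine ⟨⟨⟨?_⟩, ?_⟩, htail_nodup⟩
    · -- edges nodup
      rw [hedges]
      refine List.Nodup.map_on ?_ (List.nodup_range (n := n))
      intro i hi j hj hij
      rw [List.mem_range] at hi hj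
      rw [Sym2.eq_iff] at hij
      rcases hij with ⟨h1, h2⟩ | ⟨h1, h2⟩
      · have := hmodinj _ _ h1
        rw [Nat.mod_eq_of_lt hi, Nat.mod_eq_of_lt hj] at this; omega
      · -- g' i = g' (j+1), g' (i+1) = g' j : then 2 ≡ 0 mod n, contra
        have e1 := hmodinj _ _ h1
        have e2 := hmodinj _ _ h2
        exfalso
        have key : (i + 2) % n = i % n := by
          calc (i + 2) % n = ((i+1) % n + 1) % n := by
                rw [Nat.add_mod (i+1) 1 n, Nat.mod_eq_of_lt (show 1 < n by omega)]
            _ = (j % n + 1) % n := by rw [e2]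
            _ = (j + 1) % n := by
                rw [Nat.add_mod j 1 n, Nat.mod_eq_of_lt (show 1 < n by omega)]
            _ = i % n := e1.symm
        have : (i + 2) ≡ i [MOD n] := key
        have h3 : i + 2 ≡ i + 0 [MOD n] := by simpa using this
        have h2' : 2 ≡ 0 [MOD n] := Nat.ModEq.add_left_cancel' i h3
        have : n ∣ 2 := (Nat.modEq_zero_iff_dvd).mp h2'
        have := Nat.le_of_dvd (by norm_num) this
        omega
    · -- not nil
      intro hnil
      have := idxWalk_length G g' 0 n hadj'
      have hlen : c.length = n := by
        show ((idxWalk G g' 0 n hadj').copy rfl hclose).length = n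
        rw [SimpleGraph.Walk.length_copy]; exact this
      rw [hnil] at hlen
      simp at hlen
      omega
  have hham : c.IsHamiltonianCycle := by
    rw [SimpleGraph.Walk.isHamiltonianCycle_iff_isCycle_and_support_count_tail_eq_one]
    refine ⟨hcyc, fun v => ?_⟩
    rw [htail]
    apply List.count_eq_one_of_mem
    · exact List.Nodup.map_on
        (fun x hx y hy hxy => hsuccinj x (List.mem_range.mp hx) y (List.mem_range.mp hy) hxy)
        (List.nodup_range (n := n))
    · obtain ⟨s, hs, rfl⟩ := hsurj v
      rcases Nat.eq_zero_or_pos s with rfl | hpos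
      · refine List.mem_map.mpr ⟨n-1, List.mem_range.mpr (by omega), ?_⟩
        show g ((n-1+1) % n) = g 0
        have : n - 1 + 1 = n := by omega
        rw [this, Nat.mod_self]
      · refine List.mem_map.mpr ⟨s-1, List.mem_range.mpr (by omega), ?_⟩
        show g ((s-1+1) % n) = g s
        have : s - 1 + 1 = s := by omega
        rw [this, Nat.mod_eq_of_lt hs]
  intro _
  exact ⟨g' 0, c, hham⟩

lemma cyclic_of_isHamiltonian (G : SimpleGraph (Fin n)) (hn : 3 ≤ n)
    (hham : G.IsHamiltonian) : ∃ g : ℕ → Fin n, IsCyc G g := by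
  obtain ⟨a, p, hp⟩ := hham (by simp [Fintype.card_fin]; omega)
  have hn0 : 0 < n := by omega
  set l : List (Fin n) := p.support.tail with hl
  have hlen : l.length = n := by
    have h1 : p.support.length = p.length + 1 := SimpleGraph.Walk.length_support p
    have h2 : p.length = n := by
      have := hp.length_eq
      simpa using this
    have : l.length = p.support.length - 1 := by rw [hl, List.length_tail]
    omega
  have hnodup : l.Nodup := hp.isCycle.support_nodup
  have hcount : ∀ v, l.count v = 1 := by
    intro v
    have := hp.isHamiltonian_tail v
    rwa [SimpleGraph.Walk.support_tail_of_not_nil p hp.isCycle.not_nil] at this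
  refine ⟨fun i => l.getD (i % n) a, ?_, ?_, ?_⟩
  · intro i hi j hj hij
    dsimp only at hij
    rw [Nat.mod_eq_of_lt hi, Nat.mod_eq_of_lt hj] at hij
    rw [List.getD_eq_getElem l a (show i < l.length by omega),
      List.getD_eq_getElem l a (show j < l.length by omega)] at hij
    exact (List.Nodup.getElem_inj_iff hnodup).mp hij
  · intro v
    have hmem : v ∈ l := by
      have := hcount v
      have : 0 < l.count v := by omega
      exact List.count_pos_iff.mp this
    obtain ⟨i, hi, hv⟩ := List.mem_iff_getElem.mp hmem
    refine ⟨i, by omega, ?_⟩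
    dsimp only
    rw [Nat.mod_eq_of_lt (by omega), List.getD_eq_getElem l a (by omega)]
    exact hv
  · intro i hi
    dsimp only
    have hchain : List.IsChain G.Adj (a :: l) := by
      have h0 := SimpleGraph.Walk.isChain_adj_support p
      rw [← SimpleGraph.Walk.cons_support_tail hp.isCycle.not_nil] at h0
      rwa [SimpleGraph.Walk.support_tail_of_not_nil p hp.isCycle.not_nil] at h0
    have hchain_get := List.isChain_iff_getElem.mp hchain
    rcases Nat.lt_or_ge (i+1) n with h | h
    · -- internal edge
      rw [Nat.mod_eq_of_lt h, Nat.mod_eq_of_lt h, Nat.mod_eq_of_lt hi]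
      rw [List.getD_eq_getElem l a (show i < l.length by omega),
        List.getD_eq_getElem l a (show i + 1 < l.length by omega)]
      have := hchain_get (i+1) (by simp; omega)
      simp only [List.get_eq_getElem, List.getElem_cons_succ] at this
      exact this
    · -- wrap edge : i = n-1
      have h1n : (i+1) % n = 0 := by
        have : i + 1 = n := by omega
        rw [this, Nat.mod_self]
      rw [h1n, Nat.mod_eq_of_lt hi, Nat.zero_mod]
      have hlne : l ≠ [] := by
        intro h'
        rw [h'] at hlen; simp at hlen; omega
      have hsup : a :: l = p.support := by
        rw [hl, ← SimpleGraph.Walk.support_tail_of_not_nil p hp.isCycle.not_nil,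
          SimpleGraph.Walk.cons_support_tail hp.isCycle.not_nil]
      have h1 : p.support.getLast? = some a := by
        rw [List.getLast?_eq_getLast (l := p.support) (by simp), SimpleGraph.Walk.getLast_support]
      have h2 : l.getLast? = some a := by
        obtain ⟨b, l', hbl⟩ := List.exists_cons_of_ne_nil hlne
        rw [← h1, ← hsup, hbl, List.getLast?_cons_cons]
      have h3 : l[l.length - 1]? = some a := by rw [← List.getLast?_eq_getElem? (l := l)]; exact h2
      have hlast : l.getD i a = a := by
        rw [List.getD_eq_getElem?_getD, show i = l.length - 1 by omega, h3]
        rfl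
      rw [hlast]
      rw [List.getD_eq_getElem l a (show 0 < l.length by omega)]
      have := hchain_get 0 (by simp; omega)
      simp only [List.get_eq_getElem, List.getElem_cons_succ, List.getElem_cons_zero] at this
      exact this

/-- Ore's rotation: a Hamiltonian path whose endpoints have degree sum `≥ n`
yields a Hamiltonian cycle. -/
lemma ore_path (G : SimpleGraph (Fin n)) [DecidableRel G.Adj] (hn : 3 ≤ n) (p : ℕ → Fin n)
    (hinj : ∀ i < n, ∀ j < n, p i = p j → i = j) (hsurj : ∀ v, ∃ i < n, p i = v)
    (hadj : ∀ i, i + 1 < n → G.Adj (p i) (p (i+1)))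
    (hnadj : ¬G.Adj (p 0) (p (n-1)))
    (hdeg : n ≤ G.degree (p 0) + G.degree (p (n-1))) : G.IsHamiltonian := by
  set u := p (n-1) with hu
  set v := p 0 with hv
  set A : Finset ℕ := (Finset.range n).filter (fun j => G.Adj u (p j)) with hA
  set B : Finset ℕ := (Finset.range n).filter (fun j => G.Adj v (p j)) with hB
  have hcardA : A.card = G.degree u := by
    rw [hA]
    rw [SimpleGraph.degree]
    apply Finset.card_bij (fun a _ => p a)
    · intro a ha
      rw [Finset.mem_filter, Finset.mem_range] at ha
      rw [SimpleGraph.mem_neighborFinset]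
      exact ha.2
    · intro a ha b hb hab
      rw [Finset.mem_filter, Finset.mem_range] at ha hb
      exact hinj a ha.1 b hb.1 hab
    · intro w hw
      rw [SimpleGraph.mem_neighborFinset] at hw
      obtain ⟨i, hi, rfl⟩ := hsurj w
      exact ⟨i, Finset.mem_filter.mpr ⟨Finset.mem_range.mpr hi, hw⟩, rfl⟩
  have hcardB : B.card = G.degree v := by
    rw [hB, SimpleGraph.degree]
    apply Finset.card_bij (fun a _ => p a)
    · intro a ha
      rw [Finset.mem_filter, Finset.mem_range] at ha
      rw [SimpleGraph.mem_neighborFinset]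
      exact ha.2
    · intro a ha b hb hab
      rw [Finset.mem_filter, Finset.mem_range] at ha hb
      exact hinj a ha.1 b hb.1 hab
    · intro w hw
      rw [SimpleGraph.mem_neighborFinset] at hw
      obtain ⟨i, hi, rfl⟩ := hsurj w
      exact ⟨i, Finset.mem_filter.mpr ⟨Finset.mem_range.mpr hi, hw⟩, rfl⟩
  have hA0 : 0 ∉ A := by
    rw [hA, Finset.mem_filter]
    rintro ⟨-, h⟩
    exact hnadj (h.symm)
  have hAn : n - 1 ∉ A := by
    rw [hA, Finset.mem_filter]
    rintro ⟨-, h⟩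
    exact G.loopless.irrefl u h
  have hB0 : 0 ∉ B := by
    rw [hB, Finset.mem_filter]
    rintro ⟨-, h⟩
    exact G.loopless.irrefl v h
  have hBn : n - 1 ∉ B := by
    rw [hB, Finset.mem_filter]
    rintro ⟨-, h⟩
    exact hnadj h
  -- find j ∈ B with j - 1 ∈ A
  have hC : ∃ j ∈ B, j - 1 ∈ A ∧ 2 ≤ j ∧ j ≤ n - 2 := by
    by_contra hcon
    push_neg at hcon
    have hdisj : Disjoint B (A.image (· + 1)) := by
      rw [Finset.disjoint_right]
      intro j hj hjB
      obtain ⟨a, ha, rfl⟩ := Finset.mem_image.mp hj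
      have ha' := ha
      rw [hA, Finset.mem_filter, Finset.mem_range] at ha'
      have ha0 : a ≠ 0 := by
        intro h; subst h
        exact hA0 ha
      have han : a ≠ n - 1 := by
        intro h; subst h
        exact hAn ha
      have h1 : a + 1 - 1 ∈ A := by simpa using ha
      have hj2 : 2 ≤ a + 1 := by omega
      have hlt := hcon (a+1) hjB h1 hj2
      have hb' := hjB
      rw [hB, Finset.mem_filter, Finset.mem_range] at hb'
      have hne : a + 1 ≠ n - 1 := fun hh => hBn (hh ▸ hjB)
      omega
    have hsub : B ∪ A.image (· + 1) ⊆ (Finset.range n).erase 0 := by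
      intro j hj
      rcases Finset.mem_union.mp hj with hj | hj
      · have hb' := hj
        rw [hB, Finset.mem_filter, Finset.mem_range] at hb'
        refine Finset.mem_erase.mpr ⟨?_, Finset.mem_range.mpr hb'.1⟩
        intro h; subst h; exact hB0 hj
      · obtain ⟨a, ha, rfl⟩ := Finset.mem_image.mp hj
        have ha' := ha
        rw [hA, Finset.mem_filter, Finset.mem_range] at ha'
        have han : a ≠ n - 1 := fun h => hAn (h ▸ ha)
        exact Finset.mem_erase.mpr ⟨by omega, Finset.mem_range.mpr (by omega)⟩
    have hcard : B.card + (A.image (· + 1)).card ≤ n - 1 := by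
      rw [← Finset.card_union_of_disjoint hdisj]
      calc (B ∪ A.image (· + 1)).card ≤ ((Finset.range n).erase 0).card :=
            Finset.card_le_card hsub
        _ = n - 1 := by rw [Finset.card_erase_of_mem (Finset.mem_range.mpr (by omega)), Finset.card_range]
    have hcardim : (A.image (· + 1)).card = A.card := by
      apply Finset.card_image_of_injective
      intro a b hab
      dsimp only at hab
      omega
    have hfin : n ≤ n - 1 := by
      calc n ≤ G.degree v + G.degree u := by omega
        _ = B.card + A.card := by rw [hcardA, hcardB]
        _ = B.card + (A.image (· + 1)).card := by rw [hcardim]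
        _ ≤ n - 1 := hcard
    omega
  obtain ⟨j, hjB, hjA, hj2, hjn2⟩ := hC
  rw [hB, Finset.mem_filter, Finset.mem_range] at hjB
  rw [hA, Finset.mem_filter, Finset.mem_range] at hjA
  -- build the new Hamiltonian cycle
  set h : ℕ → Fin n := fun i => if i < j then p i else p (n - 1 + j - i) with hh
  apply isHamiltonian_of_cyclic G hn h
  refine ⟨?_, ?_, ?_⟩
  · intro i hi i' hi' hii
    rw [hh] at hii
    dsimp only at hii
    by_cases h1 : i < j <;> by_cases h2 : i' < j <;> simp only [h1, h2, if_true, if_false, if_pos, if_neg] at hii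
    · exact hinj i (by omega) i' (by omega) hii
    · have := hinj i (by omega) (n - 1 + j - i') (by omega) hii
      omega
    · have := hinj (n - 1 + j - i) (by omega) i' (by omega) hii
      omega
    · have := hinj (n - 1 + j - i) (by omega) (n - 1 + j - i') (by omega) hii
      omega
  · intro w
    obtain ⟨s, hs, rfl⟩ := hsurj w
    by_cases hsj : s < j
    · exact ⟨s, by omega, by rw [hh]; simp [hsj]⟩
    · refine ⟨n - 1 + j - s, by omega, ?_⟩
      rw [hh]
      dsimp only
      rw [if_neg (by omega)]
      congr 1
      omega
  · intro i hi
    rcases Nat.lt_or_ge (i+1) n with hlt | hge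
    · rw [Nat.mod_eq_of_lt hlt]
      rcases Nat.lt_or_ge (i+1) j with hc1 | hc2
      · -- both in first branch
        rw [hh]
        dsimp only
        rw [if_pos (by omega), if_pos hc1]
        exact hadj i (by omega)
      · rcases Nat.eq_or_lt_of_le hc2 with hc3 | hc3
        · -- i + 1 = j : edge p (j-1) ~ u
          rw [hh]
          dsimp only
          rw [if_pos (by omega), if_neg (by omega)]
          have h1 : i = j - 1 := by omega
          have h2 : n - 1 + j - (i + 1) = n - 1 := by omega
          rw [h2, h1]
          exact hjA.2.symm
        · -- both in second branch
          rw [hh]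
          dsimp only
          rw [if_neg (by omega), if_neg (by omega)]
          have key := (hadj (n - 1 + j - (i+1)) (by omega)).symm
          have h1 : n - 1 + j - (i + 1) + 1 = n - 1 + j - i := by omega
          rw [h1] at key
          exact key
    · -- wrap : i = n - 1
      have hieq : i = n - 1 := by omega
      have h1n : (i+1) % n = 0 := by
        have : i + 1 = n := by omega
        rw [this, Nat.mod_self]
      rw [h1n, hh]
      dsimp only
      rw [if_neg (by omega), if_pos (by omega)]
      have h2 : n - 1 + j - i = j := by omega
      rw [h2]
      exact hjB.2.symm

lemma mod_shift_surj (n t s : ℕ) (hn0 : 0 < n) (hs : s < n) :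
    (t + 1 + (s + n - (t+1) % n) % n) % n = s := by
  have h1 : (t+1) % n < n := Nat.mod_lt _ hn0
  have h2 : (t + 1 + (s + n - (t+1) % n) % n) ≡ ((t+1) % n + (s + n - (t+1) % n)) [MOD n] :=
    Nat.ModEq.add (Nat.mod_modEq (t+1) n).symm (Nat.mod_modEq (s + n - (t+1) % n) n)
  have h3 : (t+1) % n + (s + n - (t+1) % n) = s + n := by omega
  have h4 : s + n ≡ s [MOD n] := by
    rw [Nat.ModEq, Nat.add_mod_right]
  have h6 : ((t+1) % n + (s + n - (t+1) % n)) ≡ s [MOD n] := by rw [h3]; exact h4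
  have h5 : (t + 1 + (s + n - (t+1) % n) % n) ≡ s [MOD n] := h2.trans h6
  rw [Nat.ModEq, Nat.mod_eq_of_lt hs] at h5
  exact h5

lemma ham_of_insert (G : SimpleGraph (Fin n)) [DecidableRel G.Adj] (hn : 3 ≤ n) {u v : Fin n}
    (hne : u ≠ v) (hnadj : ¬G.Adj u v) (hdeg : n ≤ G.degree u + G.degree v)
    (hham : (G ⊔ fromEdgeSet {s(u,v)}).IsHamiltonian) : G.IsHamiltonian := by
  have hn0 : 0 < n := by omega
  set G' := G ⊔ fromEdgeSet {s(u,v)} with hG'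
  have hG'adj : ∀ x y, G'.Adj x y → G.Adj x y ∨ s(x,y) = s(u,v) := by
    intro x y hxy
    rw [hG', SimpleGraph.sup_adj, SimpleGraph.fromEdgeSet_adj] at hxy
    rcases hxy with h | ⟨h, -⟩
    · exact Or.inl h
    · exact Or.inr h
  obtain ⟨g, hinj, hsurj, hadj⟩ := cyclic_of_isHamiltonian G' hn hham
  by_cases hall : ∀ i < n, G.Adj (g i) (g ((i+1) % n))
  · exact isHamiltonian_of_cyclic G hn g ⟨hinj, hsurj, hall⟩
  push_neg at hall
  obtain ⟨t, ht, htn⟩ := hall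
  have hedge : s(g t, g ((t+1) % n)) = s(u,v) := by
    rcases hG'adj _ _ (hadj t ht) with h | h
    · exact absurd h htn
    · exact h
  set t' := (t+1) % n with ht'
  set q : ℕ → Fin n := fun i => g ((t + 1 + i) % n) with hq
  -- helper: mod-equality implies index equality for args < n
  have hgmod : ∀ a b : ℕ, g (a % n) = g (b % n) → a % n = b % n := by
    intro a b hab
    exact hinj _ (Nat.mod_lt _ hn0) _ (Nat.mod_lt _ hn0) hab
  have hqinj : ∀ i < n, ∀ j < n, q i = q j → i = j := by
    intro i hi j hj hij
    rw [hq] at hij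
    dsimp only at hij
    have := hgmod _ _ hij
    have h2 : i ≡ j [MOD n] := Nat.ModEq.add_left_cancel' (t+1) this
    rw [Nat.ModEq, Nat.mod_eq_of_lt hi, Nat.mod_eq_of_lt hj] at h2
    exact h2
  have hqsurj : ∀ w, ∃ i < n, q i = w := by
    intro w
    obtain ⟨s, hs, rfl⟩ := hsurj w
    refine ⟨(s + n - (t+1) % n) % n, Nat.mod_lt _ hn0, ?_⟩
    rw [hq]
    dsimp only
    congr 1
    exact mod_shift_surj n t s hn0 hs
  have hqadj : ∀ i, i + 1 < n → G.Adj (q i) (q (i+1)) := by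
    intro i hi1
    set a := (t + 1 + i) % n with ha
    have han : a < n := Nat.mod_lt _ hn0
    have hstep : (t + 1 + (i+1)) % n = (a + 1) % n := by
      rw [ha]
      conv_lhs => rw [show t + 1 + (i+1) = (t + 1 + i) + 1 by omega]
      rw [Nat.add_mod (t+1+i) 1 n, Nat.mod_eq_of_lt (show 1 < n by omega)]
    have hq1 : q i = g a := rfl
    have hq2 : q (i+1) = g ((a+1) % n) := by rw [hq]; dsimp only; rw [hstep]
    rw [hq1, hq2]
    rcases hG'adj _ _ (hadj a han) with h | h
    · exact h
    · -- the cyclic edge at a equals s(u,v) = s(g t, g t') : contradiction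
      exfalso
      rw [← hedge] at h
      rw [Sym2.eq_iff] at h
      rcases h with ⟨h1, h2⟩ | ⟨h1, h2⟩
      · -- g a = g t : a = t, impossible
        have hat : a = t := hinj a han t ht h1
        have : (t + 1 + i) ≡ t [MOD n] := by
          rw [Nat.ModEq, Nat.mod_eq_of_lt ht]; exact hat
        have h3 : 1 + i ≡ 0 [MOD n] := by
          have : t + (1 + i) ≡ t + 0 [MOD n] := by simpa [Nat.add_assoc] using this
          exact Nat.ModEq.add_left_cancel' t this
        have : n ∣ 1 + i := (Nat.modEq_zero_iff_dvd).mp h3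
        have := Nat.le_of_dvd (by omega) this
        omega
      · -- g a = g t', g ((a+1)%n) = g t : then t ≡ t + 2 [MOD n]
        have e1 : a = t' := by
          have := hinj a han t' (Nat.mod_lt _ hn0) h1
          exact this
        have e2 : (a+1) % n = t := by
          have := hinj ((a+1) % n) (Nat.mod_lt _ hn0) t ht h2
          exact this
        have k1 : (t + 2) ≡ t [MOD n] := by
          calc (t + 2 : ℕ) = (t + 1) + 1 := by omega
            _ ≡ t' + 1 [MOD n] := (Nat.mod_modEq (t+1) n).symm.add_right 1
            _ = a + 1 := by rw [e1]
            _ ≡ (a+1) % n [MOD n] := (Nat.mod_modEq (a+1) n).symm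
            _ = t := e2
        have h3 : 2 ≡ 0 [MOD n] := by
          have : t + 2 ≡ t + 0 [MOD n] := by simpa using k1
          exact Nat.ModEq.add_left_cancel' t this
        have : n ∣ 2 := (Nat.modEq_zero_iff_dvd).mp h3
        have := Nat.le_of_dvd (by omega) this
        omega
  have hq0 : q 0 = g t' := by rw [hq]
  have hqn1 : q (n-1) = g t := by
    rw [hq]
    dsimp only
    congr 1
    have : t + 1 + (n - 1) = t + n := by omega
    rw [this, Nat.add_mod_right, Nat.mod_eq_of_lt ht]
  rw [Sym2.eq_iff] at hedge
  rcases hedge with ⟨h1, h2⟩ | ⟨h1, h2⟩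
  · -- g t = u, g t' = v : q 0 = v, q (n-1) = u
    apply ore_path G hn q hqinj hqsurj hqadj
    · rw [hq0, hqn1, h1, h2]
      intro h
      exact hnadj h.symm
    · rw [hq0, hqn1, h1, h2]
      omega
  · -- g t = v, g t' = u : q 0 = u, q (n-1) = v
    apply ore_path G hn q hqinj hqsurj hqadj
    · rw [hq0, hqn1, h1, h2]
      exact hnadj
    · rw [hq0, hqn1, h1, h2]
      omega


lemma two_mul_choose_two (m : ℕ) : 2 * m.choose 2 = m * (m - 1) := by
  induction m with
  | zero => rfl
  | succ m ih =>
    rw [Nat.choose_succ_succ, Nat.choose_one_right, Nat.mul_add, ih]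
    cases m with
    | zero => rfl
    | succ k => simp [Nat.succ_sub_one]; ring

lemma choose_two_succ (m : ℕ) : (m+1).choose 2 = m.choose 2 + m := by
  rw [Nat.choose_succ_succ, Nat.choose_one_right, Nat.add_comm]

lemma step_down : ∀ (d i n : ℕ), i + (i + d) + 1 ≤ n →
    (n - (i+d)).choose 2 + (i+d) * i ≤ (n - i).choose 2 + i * i
  | 0, i, n, _ => le_refl _
  | d+1, i, n, h => by
    have h1 : n - (i+d) = (n - (i+d+1)) + 1 := by omega
    have h2 : (n - (i+d)).choose 2 = (n - (i+d+1)).choose 2 + (n - (i+d+1)) := by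
      rw [h1, choose_two_succ]
    have h3 : (i+d+1) * i = (i+d) * i + i := by ring
    have h4 : i ≤ n - (i+d+1) := by omega
    have h5 := step_down d i n (by omega)
    have key : (n - (i+(d+1))).choose 2 + (i+(d+1)) * i ≤ (n - (i+d)).choose 2 + (i+d) * i := by
      have e1 : i + (d+1) = i + d + 1 := by omega
      rw [e1, h3, h2]
      omega
    exact key.trans h5

lemma g_step_up (n m : ℕ) (h : n ≤ 3*m + 2) (h2 : m + 1 ≤ n) :
    (n - m).choose 2 + m*m ≤ (n - (m+1)).choose 2 + (m+1)*(m+1) := by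
  have h1 : n - m = (n - (m+1)) + 1 := by omega
  have h3 : (n - m).choose 2 = (n - (m+1)).choose 2 + (n - (m+1)) := by
    rw [h1, choose_two_succ]
  have h4 : (m+1)*(m+1) = m*m + 2*m + 1 := by ring
  omega

lemma g_step_down (n m : ℕ) (h : 3*m + 2 ≤ n) :
    (n - (m+1)).choose 2 + (m+1)*(m+1) ≤ (n - m).choose 2 + m*m := by
  have h1 : n - m = (n - (m+1)) + 1 := by omega
  have h3 : (n - m).choose 2 = (n - (m+1)).choose 2 + (n - (m+1)) := by
    rw [h1, choose_two_succ]
  have h4 : (m+1)*(m+1) = m*m + 2*m + 1 := by ring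
  omega

lemma g_up : ∀ (d m n : ℕ), n ≤ 3*m + 2 → m + d ≤ n →
    (n - m).choose 2 + m*m ≤ (n - (m+d)).choose 2 + (m+d)*(m+d)
  | 0, m, n, _, _ => le_refl _
  | d+1, m, n, h, h2 => by
    have ih := g_up d m n h (by omega)
    have step := g_step_up n (m+d) (by omega) (by omega)
    have e1 : m + (d+1) = (m + d) + 1 := by omega
    rw [e1]
    exact ih.trans step

lemma g_down : ∀ (d k n : ℕ), 3*(k+d) + 2 ≤ n + 3 →
    (n - (k+d)).choose 2 + (k+d)*(k+d) ≤ (n - k).choose 2 + k*k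
  | 0, k, n, _ => le_refl _
  | d+1, k, n, h => by
    have ih := g_down d k n (by omega)
    have step := g_step_down n (k+d) (by omega)
    have e1 : k + (d+1) = (k + d) + 1 := by omega
    rw [e1]
    exact step.trans ih

lemma g_convex (n k i : ℕ) (hk : k ≤ i) (hi : 2*i + 1 ≤ n) :
    (n - i).choose 2 + i*i ≤
      max ((n - k).choose 2 + k*k) ((n - (n-1)/2).choose 2 + ((n-1)/2) * ((n-1)/2)) := by
  set M := (n-1)/2 with hM
  have hiM : i ≤ M := by omega
  rcases le_or_gt n (3*i + 2) with h | h
  · refine le_max_of_le_right ?_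
    have := g_up (M - i) i n h (by omega)
    have e1 : i + (M - i) = M := by omega
    rw [e1] at this
    exact this
  · refine le_max_of_le_left ?_
    have := g_down (i - k) k n (by omega)
    have e1 : k + (i - k) = i := by omega
    rw [e1] at this
    exact this

/-- Erdős's counting bound for a graph in which `(u,v)` is a nonadjacent pair
maximizing the degree sum. -/
lemma count_bound (G : SimpleGraph (Fin n)) [DecidableRel G.Adj] {u v : Fin n}
    (hne : u ≠ v) (hnadj : ¬G.Adj u v)
    (hmax : ∀ w x : Fin n, w ≠ x → ¬G.Adj w x → G.degree w + G.degree x ≤ G.degree u + G.degree v)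
    (hsum : G.degree u + G.degree v + 1 ≤ n) :
    G.edgeFinset.card ≤ (n - (n - 1 - G.degree v)).choose 2
      + (n - 1 - G.degree v) * G.degree u := by
  classical
  set du := G.degree u with hdu
  set dv := G.degree v with hdv
  set t := n - 1 - dv with htdef
  set A : Finset (Fin n) := Finset.univ.filter (fun w => w ≠ v ∧ ¬G.Adj v w) with hA
  have hAc : Aᶜ = insert v (G.neighborFinset v) := by
    ext w
    simp only [hA, Finset.mem_compl, Finset.mem_filter, Finset.mem_univ, true_and,
      Finset.mem_insert, SimpleGraph.mem_neighborFinset]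
    constructor
    · intro h
      by_cases hw : w = v
      · exact Or.inl hw
      · right
        by_contra hadj
        exact h ⟨hw, hadj⟩
    · rintro (rfl | h)
      · rintro ⟨h1, -⟩; exact h1 rfl
      · rintro ⟨-, h2⟩; exact h2 h
  have hAcc : Aᶜ.card = dv + 1 := by
    rw [hAc, Finset.card_insert_of_notMem (SimpleGraph.notMem_neighborFinset_self G v)]
    rfl
  have hcardA : A.card = t := by
    have h1 : Aᶜ.card = Fintype.card (Fin n) - A.card := Finset.card_compl A
    have h2 : A.card ≤ Fintype.card (Fin n) := Finset.card_le_univ A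
    rw [Fintype.card_fin] at h1 h2
    omega
  have hdegA : ∀ w ∈ A, G.degree w ≤ du := by
    intro w hw
    rw [hA, Finset.mem_filter] at hw
    obtain ⟨-, hwv, hwa⟩ := hw
    have hwa' : ¬G.Adj w v := fun h => hwa h.symm
    have := hmax w v hwv hwa'
    omega
  have hsplit : (∑ w ∈ A, G.degree w) + (∑ w ∈ Aᶜ, G.degree w) = 2 * G.edgeFinset.card := by
    rw [Finset.sum_add_sum_compl, SimpleGraph.sum_degrees_eq_twice_card_edges]
  have hsumA : ∑ w ∈ A, G.degree w ≤ t * du := by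
    calc ∑ w ∈ A, G.degree w ≤ A.card * du := by
          apply Finset.sum_le_card_nsmul
          intro w hw
          exact hdegA w hw
      _ = t * du := by rw [hcardA]
  -- the cross-count
  have hcross : ∑ w ∈ Aᶜ, (A.filter (G.Adj w)).card ≤ t * du := by
    have swap : ∑ w ∈ Aᶜ, (A.filter (G.Adj w)).card
        = ∑ a ∈ A, (Aᶜ.filter (fun w => G.Adj w a)).card := by
      simp only [Finset.card_filter]
      rw [Finset.sum_comm]
    rw [swap]
    calc ∑ a ∈ A, (Aᶜ.filter (fun w => G.Adj w a)).card
        ≤ ∑ a ∈ A, G.degree a := by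
          apply Finset.sum_le_sum
          intro a ha
          rw [SimpleGraph.degree]
          apply Finset.card_le_card
          intro w hw
          rw [Finset.mem_filter] at hw
          rw [SimpleGraph.mem_neighborFinset]
          exact hw.2.symm
      _ ≤ ∑ _a ∈ A, du := Finset.sum_le_sum (fun a ha => hdegA a ha)
      _ = t * du := by rw [Finset.sum_const, smul_eq_mul, hcardA]
  have hsumAc : ∑ w ∈ Aᶜ, G.degree w ≤ t * du + (dv + 1) * dv := by
    have hstep : ∀ w ∈ Aᶜ, G.degree w ≤ (A.filter (G.Adj w)).card + dv := by
      intro w hw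
      have hdeg : G.neighborFinset w ⊆ A.filter (G.Adj w) ∪ (Aᶜ.erase w) := by
        intro x hx
        rw [SimpleGraph.mem_neighborFinset] at hx
        rw [Finset.mem_union]
        by_cases hxA : x ∈ A
        · exact Or.inl (Finset.mem_filter.mpr ⟨hxA, hx⟩)
        · refine Or.inr (Finset.mem_erase.mpr ⟨?_, Finset.mem_compl.mpr hxA⟩)
          intro hxw
          subst hxw
          exact G.loopless.irrefl x hx
      calc G.degree w = (G.neighborFinset w).card := rfl
        _ ≤ (A.filter (G.Adj w) ∪ Aᶜ.erase w).card := Finset.card_le_card hdeg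
        _ ≤ (A.filter (G.Adj w)).card + (Aᶜ.erase w).card := Finset.card_union_le _ _
        _ ≤ (A.filter (G.Adj w)).card + dv := by
            have := Finset.card_erase_of_mem hw
            omega
    calc ∑ w ∈ Aᶜ, G.degree w ≤ ∑ w ∈ Aᶜ, ((A.filter (G.Adj w)).card + dv) :=
          Finset.sum_le_sum hstep
      _ = (∑ w ∈ Aᶜ, (A.filter (G.Adj w)).card) + Aᶜ.card * dv := by
          rw [Finset.sum_add_distrib, Finset.sum_const, smul_eq_mul]
      _ ≤ t * du + (dv + 1) * dv := by
          rw [hAcc]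
          omega
  have h2C : 2 * (dv + 1).choose 2 = (dv + 1) * dv := by
    rw [two_mul_choose_two]
    simp
  have hnt : n - t = dv + 1 := by omega
  rw [hnt]
  omega

lemma complete_ham (G : SimpleGraph (Fin n)) (hn : 3 ≤ n)
    (hcomp : ∀ w x : Fin n, w ≠ x → G.Adj w x) : G.IsHamiltonian := by
  have hn0 : 0 < n := by omega
  apply isHamiltonian_of_cyclic G hn (fun i => ⟨i % n, Nat.mod_lt _ hn0⟩)
  refine ⟨?_, ?_, ?_⟩
  · intro i hi j hj hij
    have := congrArg Fin.val hij
    simpa [Nat.mod_eq_of_lt hi, Nat.mod_eq_of_lt hj] using this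
  · intro v
    exact ⟨v.val, v.isLt, by simp [Nat.mod_eq_of_lt v.isLt]⟩
  · intro i hi
    apply hcomp
    simp only [ne_eq, Fin.mk.injEq]
    rw [Nat.mod_eq_of_lt hi, Nat.mod_mod_of_dvd _ dvd_rfl]
    rcases Nat.lt_or_ge (i+1) n with h | h
    · rw [Nat.mod_eq_of_lt h]; omega
    · have : i + 1 = n := by omega
      rw [this, Nat.mod_self]
      omega

lemma final_bound (G : SimpleGraph (Fin n)) [DecidableRel G.Adj] {k : ℕ} {u v : Fin n}
    (hne : u ≠ v) (hnadj : ¬G.Adj u v)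
    (hmax : ∀ w x : Fin n, w ≠ x → ¬G.Adj w x → G.degree w + G.degree x ≤ G.degree u + G.degree v)
    (hsum : G.degree u + G.degree v + 1 ≤ n) (hk : k ≤ G.degree u)
    (hle : G.degree u ≤ G.degree v) :
    G.edgeFinset.card ≤
      max ((n - k).choose 2 + k*k) ((n - (n-1)/2).choose 2 + ((n-1)/2) * ((n-1)/2)) := by
  have h1 := count_bound G hne hnadj hmax hsum
  set du := G.degree u with hdu
  set dv := G.degree v with hdv
  set t := n - 1 - dv with ht
  have hit : du ≤ t := by omega
  have h2 := step_down (t - du) du n (by omega)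
  have e1 : du + (t - du) = t := by omega
  rw [e1] at h2
  have h3 := g_convex n k du hk (by omega)
  calc G.edgeFinset.card ≤ (n - t).choose 2 + t * du := h1
    _ ≤ (n - du).choose 2 + du * du := h2
    _ ≤ _ := h3

lemma card_nat_edge (G : SimpleGraph (Fin n)) [DecidableRel G.Adj] :
    Nat.card G.edgeSet = G.edgeFinset.card := by
  rw [Nat.card_eq_fintype_card, SimpleGraph.edgeFinset, Set.toFinset_card]

lemma card_nat_nbr (G : SimpleGraph (Fin n)) [DecidableRel G.Adj] (v : Fin n) :
    Nat.card (G.neighborSet v) = G.degree v := by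
  rw [Nat.card_eq_fintype_card, SimpleGraph.card_neighborSet_eq_degree]

lemma no_pair_case (hn : 3 ≤ n) {k : ℕ} (G : SimpleGraph (Fin n)) [DecidableRel G.Adj]
    (hdeg : ∀ v, k ≤ G.degree v) (hnh : ¬G.IsHamiltonian)
    (hnopair : ∀ u v : Fin n, u ≠ v → ¬G.Adj u v → G.degree u + G.degree v < n) :
    G.edgeFinset.card ≤
      max ((n - k).choose 2 + k*k) ((n - (n-1)/2).choose 2 + ((n-1)/2) * ((n-1)/2)) := by
  classical
  set P : Finset (Fin n × Fin n) :=
    (Finset.univ ×ˢ Finset.univ).filter (fun p => p.1 ≠ p.2 ∧ ¬G.Adj p.1 p.2) with hP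
  rcases P.eq_empty_or_nonempty with hPe | hPn
  · -- complete graph: contradiction
    exfalso
    apply hnh
    apply complete_ham G hn
    intro w x hwx
    by_contra hnadj
    have : (w, x) ∈ P := by
      rw [hP, Finset.mem_filter]
      exact ⟨Finset.mem_product.mpr ⟨Finset.mem_univ _, Finset.mem_univ _⟩, hwx, hnadj⟩
    rw [hPe] at this
    exact absurd this (Finset.notMem_empty _)
  · obtain ⟨p, hp, hpmax⟩ := Finset.exists_max_image P (fun p => G.degree p.1 + G.degree p.2) hPn
    rw [hP, Finset.mem_filter] at hp
    obtain ⟨-, hne, hnadj⟩ := hp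
    have hmax : ∀ w x : Fin n, w ≠ x → ¬G.Adj w x →
        G.degree w + G.degree x ≤ G.degree p.1 + G.degree p.2 := by
      intro w x hwx hwa
      exact hpmax (w, x) (by
        rw [hP, Finset.mem_filter]
        exact ⟨Finset.mem_product.mpr ⟨Finset.mem_univ _, Finset.mem_univ _⟩, hwx, hwa⟩)
    have hsum : G.degree p.1 + G.degree p.2 + 1 ≤ n := by
      have := hnopair p.1 p.2 hne hnadj
      omega
    rcases le_total (G.degree p.1) (G.degree p.2) with hle | hle
    · exact final_bound G hne hnadj hmax hsum (hdeg p.1) hle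
    · have hne' : p.2 ≠ p.1 := hne.symm
      have hnadj' : ¬G.Adj p.2 p.1 := fun h => hnadj h.symm
      have hmax' : ∀ w x : Fin n, w ≠ x → ¬G.Adj w x →
          G.degree w + G.degree x ≤ G.degree p.2 + G.degree p.1 := by
        intro w x h1 h2
        have := hmax w x h1 h2
        omega
      exact final_bound G hne' hnadj' hmax' (by omega) (hdeg p.2) hle

lemma nonham_bound (hn : 3 ≤ n) {k : ℕ} (hk : 1 ≤ k) (hkn : 2*k + 1 ≤ n) :
    ∀ m : ℕ, ∀ G : SimpleGraph (Fin n),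
      n.choose 2 ≤ Nat.card G.edgeSet + m →
      (∀ v, k ≤ Nat.card (G.neighborSet v)) → ¬G.IsHamiltonian →
      Nat.card G.edgeSet ≤
        max ((n - k).choose 2 + k*k) ((n - (n-1)/2).choose 2 + ((n-1)/2) * ((n-1)/2)) := by
  intro m
  induction m with
  | zero =>
    intro G hcard hdeg hnh
    classical
    letI : DecidableRel G.Adj := Classical.decRel _
    have hdeg' : ∀ v, k ≤ G.degree v := fun v => by rw [← card_nat_nbr G v]; exact hdeg v
    rw [card_nat_edge] at hcard ⊢
    by_cases hpair : ∃ u v : Fin n, u ≠ v ∧ ¬G.Adj u v ∧ n ≤ G.degree u + G.degree v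
    · exfalso
      obtain ⟨u, v, hne, hnadj, hd⟩ := hpair
      set G' := G ⊔ fromEdgeSet {s(u,v)} with hG'
      letI : DecidableRel G'.Adj := Classical.decRel _
      have hss : G.edgeSet ⊂ G'.edgeSet := by
        refine Set.ssubset_iff_of_subset ?_ |>.mpr ?_
        · intro e he
          rw [hG', SimpleGraph.edgeSet_sup]
          exact Or.inl he
        · refine ⟨s(u,v), ?_, ?_⟩
          · rw [hG', SimpleGraph.edgeSet_sup]
            right
            rw [SimpleGraph.edgeSet_fromEdgeSet]
            exact ⟨rfl, by simp [hne]⟩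
          · rw [SimpleGraph.mem_edgeSet]
            exact hnadj
      have h1 : Nat.card G.edgeSet < Nat.card G'.edgeSet := by
        rw [Nat.card_coe_set_eq, Nat.card_coe_set_eq]
        exact Set.ncard_lt_ncard hss (Set.toFinite _)
      have h2 : Nat.card G'.edgeSet ≤ n.choose 2 := by
        have h3 := SimpleGraph.card_edgeFinset_le_card_choose_two (G := G')
        rw [Fintype.card_fin] at h3
        have h4 : Nat.card G'.edgeSet = G'.edgeFinset.card := by
          rw [Nat.card_eq_fintype_card, SimpleGraph.edgeFinset, Set.toFinset_card]
        rw [h4]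
        exact h3
      rw [card_nat_edge G] at h1
      omega
    · push_neg at hpair
      exact no_pair_case hn G hdeg' hnh hpair
  | succ m ih =>
    intro G hcard hdeg hnh
    classical
    letI : DecidableRel G.Adj := Classical.decRel _
    have hdeg' : ∀ v, k ≤ G.degree v := fun v => by rw [← card_nat_nbr G v]; exact hdeg v
    by_cases hpair : ∃ u v : Fin n, u ≠ v ∧ ¬G.Adj u v ∧ n ≤ G.degree u + G.degree v
    · obtain ⟨u, v, hne, hnadj, hd⟩ := hpair
      set G' := G ⊔ fromEdgeSet {s(u,v)} with hG'
      letI : DecidableRel G'.Adj := Classical.decRel _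
      have hnh' : ¬G'.IsHamiltonian := by
        intro h
        exact hnh (ham_of_insert G hn hne hnadj hd h)
      have hss : G.edgeSet ⊂ G'.edgeSet := by
        refine Set.ssubset_iff_of_subset ?_ |>.mpr ?_
        · intro e he
          rw [hG', SimpleGraph.edgeSet_sup]
          exact Or.inl he
        · refine ⟨s(u,v), ?_, ?_⟩
          · rw [hG', SimpleGraph.edgeSet_sup]
            right
            rw [SimpleGraph.edgeSet_fromEdgeSet]
            exact ⟨rfl, by simp [hne]⟩
          · rw [SimpleGraph.mem_edgeSet]
            exact hnadj
      have h1 : Nat.card G.edgeSet < Nat.card G'.edgeSet := by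
        rw [Nat.card_coe_set_eq, Nat.card_coe_set_eq]
        exact Set.ncard_lt_ncard hss (Set.toFinite _)
      have hdegG' : ∀ w, k ≤ Nat.card (G'.neighborSet w) := by
        intro w
        refine le_trans (hdeg w) ?_
        rw [card_nat_nbr, card_nat_nbr]
        apply Finset.card_le_card
        intro x hx
        rw [SimpleGraph.mem_neighborFinset] at hx ⊢
        rw [hG', SimpleGraph.sup_adj]
        exact Or.inl hx
      have hcardG' : n.choose 2 ≤ Nat.card G'.edgeSet + m := by omega
      have := ih G' hcardG' hdegG' hnh'
      omega
    · push_neg at hpair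
      rw [card_nat_edge]
      exact no_pair_case hn G hdeg' hnh hpair

end ErdosHam

/-- Erdős. Let `G` be a graph of order `n` with `δ(G) ≥ k`, where
`1 ≤ k ≤ (n-1)/2`. If `e(G) > max{C(n-k,2) + k², C(⌈(n+1)/2⌉,2) + ⌊(n-1)/2⌋²}`,
then `G` is Hamiltonian. -/
theorem erdos_hamiltonian {n k : ℕ} (G : SimpleGraph (Fin n)) [DecidableRel G.Adj]
    (hk : 1 ≤ k) (hkn : 2 * k + 1 ≤ n) (hδ : k ≤ G.minDegree)
    (he : max (Nat.choose (n - k) 2 + k ^ 2)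
        (Nat.choose ((n + 2) / 2) 2 + ((n - 1) / 2) ^ 2) < numEdges G) :
    G.IsHamiltonian := by
  have hn : 3 ≤ n := by omega
  by_contra hnh
  have hdeg : ∀ v, k ≤ Nat.card (G.neighborSet v) := by
    intro v
    rw [ErdosHam.card_nat_nbr]
    exact le_trans hδ (G.minDegree_le_degree v)
  have hb := ErdosHam.nonham_bound hn hk hkn (n.choose 2) G (by omega) hdeg hnh
  have hnum : numEdges G = Nat.card G.edgeSet := rfl
  have e1 : (n + 2) / 2 = n - (n-1)/2 := by omega
  have e2 : k ^ 2 = k * k := by ring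
  have e3 : ((n-1)/2) ^ 2 = ((n-1)/2) * ((n-1)/2) := by ring
  rw [hnum, e1, e2, e3] at he
  omega
end

section
/- For k ≥ 1 and n ≥ 2k + 2, the graph Nᵏₙ = Kₖ ∨ (K_{n−2k} + kK₁) has diameter 2, is not Hamiltonian, and consequently W(Nᵏₙ) = n(n−1) − e(Nᵏₙ) and H(Nᵏₙ) = (e(Nᵏₙ) + C(n,2))/2. -/
open SimpleGraph Finset

section AuxiliaryForGraphNProperties

variable {W : Type*} {G : SimpleGraph W}

lemma aux_support_eq_map_getVert {x y : W} (q : G.Walk x y) :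
    q.support = (List.range (q.length + 1)).map q.getVert := by
  induction q with
  | nil => simp [List.range_succ, SimpleGraph.Walk.getVert]
  | cons h q ih =>
    rw [SimpleGraph.Walk.length_cons, List.range_succ_eq_map, List.map_cons, List.map_map]
    rw [SimpleGraph.Walk.support_cons, ih, SimpleGraph.Walk.getVert_zero]
    congr 1

lemma aux_getVert_injOn_of_nodup {x y : W} {q : G.Walk x y} (hq : q.support.Nodup)
    {i j : ℕ} (hi : i ≤ q.length) (hj : j ≤ q.length) (h : q.getVert i = q.getVert j) :
    i = j := by
  rw [aux_support_eq_map_getVert] at hq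
  exact List.inj_on_of_nodup_map hq (by simp; omega) (by simp; omega) h

lemma aux_dist_eq_two {u v : W} (hne : u ≠ v) (hnadj : ¬ G.Adj u v) {w : W}
    (h1 : G.Adj u w) (h2 : G.Adj w v) : G.dist u v = 2 := by
  have hle : G.dist u v ≤ 2 := by
    have := G.dist_le (SimpleGraph.Walk.cons h1 (SimpleGraph.Walk.cons h2 SimpleGraph.Walk.nil))
    simpa using this
  have hreach : G.Reachable u v :=
    ⟨SimpleGraph.Walk.cons h1 (SimpleGraph.Walk.cons h2 SimpleGraph.Walk.nil)⟩
  have h0 : G.dist u v ≠ 0 := by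
    rw [SimpleGraph.dist_ne_zero_iff_ne_and_reachable]
    exact ⟨hne, hreach⟩
  have h1' : G.dist u v ≠ 1 := fun h => hnadj (SimpleGraph.dist_eq_one_iff_adj.mp h)
  omega

open scoped Classical in
lemma aux_handshake {V : Type*} [Fintype V] (G : SimpleGraph V) :
    ∑ u : V, ∑ v : V, (if G.Adj u v then 1 else 0) = 2 * numEdges G := by
  have hE : numEdges G = #G.edgeFinset := by
    rw [numEdges, Nat.card_coe_set_eq, Set.ncard_eq_toFinset_card']
    congr 1
  rw [hE, SimpleGraph.two_mul_card_edgeFinset, Finset.card_filter,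
    ← Finset.univ_product_univ, Finset.sum_product]

variable {n k : ℕ}

lemma aux_graphN_common (hk : 1 ≤ k) (u v : Fin k ⊕ (Fin (n - 2*k) ⊕ Fin k))
    (hne : u ≠ v) (hnadj : ¬ (graphN n k).Adj u v) :
    (graphN n k).Adj u (Sum.inl ⟨0, hk⟩) ∧ (graphN n k).Adj (Sum.inl ⟨0, hk⟩) v := by
  rcases u with i | w
  · exfalso
    rcases v with j | w'
    · exact hnadj (by simp [graphN, gJoin]; simpa using fun h => hne (by rw [h]))
    · exact hnadj (by simp [graphN, gJoin])
  · rcases v with j | w'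
    · exact absurd (by simp [graphN, gJoin] : (graphN n k).Adj (.inr w) (.inl j)) hnadj
    · exact ⟨by simp [graphN, gJoin], by simp [graphN, gJoin]⟩

open scoped Classical in
lemma aux_graphN_dist (hk : 1 ≤ k) (u v : Fin k ⊕ (Fin (n - 2*k) ⊕ Fin k)) :
    (graphN n k).dist u v = if (graphN n k).Adj u v then 1 else if u = v then 0 else 2 := by
  by_cases hadj : (graphN n k).Adj u v
  · rw [if_pos hadj, SimpleGraph.dist_eq_one_iff_adj]
    exact hadj
  rw [if_neg hadj]
  by_cases heq : u = v
  · rw [if_pos heq, heq, SimpleGraph.dist_self]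
  rw [if_neg heq]
  obtain ⟨h1, h2⟩ := aux_graphN_common hk u v heq hadj
  exact aux_dist_eq_two heq hadj h1 h2

lemma aux_graphN_diam (hk : 1 ≤ k) (hn : 2*k + 2 ≤ n) : (graphN n k).diam = 2 := by
  classical
  haveI : Nonempty (Fin k ⊕ (Fin (n - 2*k) ⊕ Fin k)) := ⟨Sum.inl ⟨0, hk⟩⟩
  have hd := aux_graphN_dist (n := n) hk
  have hedist : ∀ u v, (graphN n k).edist u v ≤ 2 := by
    intro u v
    by_cases heq : u = v
    · rw [heq, SimpleGraph.edist_self]; norm_num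
    by_cases hadj : (graphN n k).Adj u v
    · have := (graphN n k).edist_le hadj.toWalk
      simp only [SimpleGraph.Walk.length_cons, SimpleGraph.Walk.length_nil] at this
      exact le_trans this (by norm_num)
    obtain ⟨h1, h2⟩ := aux_graphN_common hk u v heq hadj
    have := (graphN n k).edist_le
      (SimpleGraph.Walk.cons h1 (SimpleGraph.Walk.cons h2 SimpleGraph.Walk.nil))
    simpa using this
  have hnetop : (graphN n k).ediam ≠ ⊤ := by
    intro hT
    have := SimpleGraph.ediam_le_of_edist_le (G := graphN n k) (k := 2) hedist
    rw [hT, top_le_iff] at this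
    simp at this
  have h2le : 2 ≤ (graphN n k).diam := by
    have hdle := SimpleGraph.dist_le_diam hnetop
      (u := Sum.inr (Sum.inl ⟨0, by omega⟩)) (v := Sum.inr (Sum.inr ⟨0, hk⟩))
    rw [hd] at hdle
    rw [if_neg (by simp [graphN, gJoin]), if_neg (by simp)] at hdle
    exact hdle
  have hle2 : (graphN n k).diam ≤ 2 := by
    obtain ⟨u, v, huv⟩ := SimpleGraph.exists_dist_eq_diam (G := graphN n k)
    rw [← huv, hd u v]
    split_ifs <;> omega
  omega

theorem aux_graphN_not_ham (hk : 1 ≤ k) (hn : 2*k + 2 ≤ n) :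
    ¬ (graphN n k).IsHamiltonian := by
  classical
  haveI : NeZero n := ⟨by omega⟩
  set G := graphN n k with hG
  have hcard : Fintype.card (Fin k ⊕ (Fin (n - 2*k) ⊕ Fin k)) = n := by simp; omega
  intro hham
  obtain ⟨a, p, hp⟩ := hham (by rw [hcard]; omega)
  have hqham := hp.isHamiltonian_tail
  have hqpath : p.tail.IsPath := hqham.isPath
  have hplen : p.length = n := by rw [hp.length_eq, hcard]
  have hqlen : p.tail.length = n - 1 := by rw [hqham.length_eq, hcard]
  have hpnil : ¬ p.Nil := hp.isCycle.not_nil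
  set q := p.tail with hq
  set f : ZMod n → (Fin k ⊕ (Fin (n - 2*k) ⊕ Fin k)) := fun i => q.getVert i.val with hf
  have hval : ∀ i : ZMod n, i.val ≤ q.length := fun i => by
    rw [hqlen]; have := ZMod.val_lt i; omega
  have hfinj : Function.Injective f := by
    intro i j h
    exact ZMod.val_injective n
      (aux_getVert_injOn_of_nodup hqpath.support_nodup (hval i) (hval j) h)
  have hfsurj : Function.Surjective f := by
    intro v
    have hv : v ∈ q.support := hqham.mem_support v
    rw [aux_support_eq_map_getVert] at hv
    obtain ⟨t, ht, rfl⟩ := List.mem_map.mp hv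
    have ht' : t < n := by simp only [List.mem_range] at ht; omega
    exact ⟨(t : ZMod n), by simp only [hf, ZMod.val_cast_of_lt ht']⟩
  have hadj : ∀ i : ZMod n, G.Adj (f i) (f (i + 1)) := by
    intro i
    show G.Adj (q.getVert i.val) (q.getVert (i + 1).val)
    by_cases hi : i.val + 1 < n
    · have e1 : (i + 1 : ZMod n).val = i.val + 1 := by
        conv_lhs => rw [← ZMod.natCast_rightInverse i]
        rw [← Nat.cast_one, ← Nat.cast_add, ZMod.val_cast_of_lt hi]
      rw [e1]
      exact q.adj_getVert_succ (by omega)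
    · have hn' : i.val + 1 = n := by have := ZMod.val_lt i; omega
      have e0 : (i + 1 : ZMod n) = 0 := by
        conv_lhs => rw [← ZMod.natCast_rightInverse i]
        rw [← Nat.cast_one, ← Nat.cast_add, hn', ZMod.natCast_self]
      rw [e0]
      have h1 : q.getVert i.val = a := by
        have := q.getVert_length
        rw [hqlen] at this
        rw [show i.val = n - 1 by omega]
        exact this
      have h2 : q.getVert (0 : ZMod n).val = p.getVert 1 := by
        rw [ZMod.val_zero, hq, SimpleGraph.Walk.getVert_tail p]
      rw [h1, h2]
      have := p.adj_getVert_succ (i := 0) (by omega)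
      rwa [SimpleGraph.Walk.getVert_zero] at this
  set isS : (Fin k ⊕ (Fin (n - 2*k) ⊕ Fin k)) → Prop := fun v => ∃ x, v = Sum.inl x with hisS
  set isI : (Fin k ⊕ (Fin (n - 2*k) ⊕ Fin k)) → Prop :=
    fun v => ∃ x, v = Sum.inr (Sum.inr x) with hisI
  set isM : (Fin k ⊕ (Fin (n - 2*k) ⊕ Fin k)) → Prop :=
    fun v => ∃ x, v = Sum.inr (Sum.inl x) with hisM
  have hF1 : ∀ u v, isI v → G.Adj u v → isS u := by
    rintro u v ⟨x, rfl⟩ hadj'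
    rcases u with i | (w | w)
    · exact ⟨i, rfl⟩
    · simp [hG, graphN, gJoin] at hadj'
    · simp [hG, graphN, gJoin] at hadj'
  have hF2 : ∀ u v, isM u → G.Adj u v → isS v ∨ isM v := by
    rintro u v ⟨x, rfl⟩ hadj'
    rcases v with i | (w | w)
    · exact Or.inl ⟨i, rfl⟩
    · exact Or.inr ⟨w, rfl⟩
    · simp [hG, graphN, gJoin] at hadj'
  have cardsub : ∀ (P : (Fin k ⊕ (Fin (n - 2*k) ⊕ Fin k)) → Prop) (c : ℕ)
      (g : Fin c → (Fin k ⊕ (Fin (n - 2*k) ⊕ Fin k))), Function.Injective g →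
      (∀ v, P v ↔ ∃ x, v = g x) →
      Nat.card {qq : ZMod n × Bool // P (f qq.1)} = 2 * c := by
    intro P c g hg hPg
    have e1 : {qq : ZMod n × Bool // P (f qq.1)} ≃ {i : ZMod n // P (f i)} × Bool :=
      { toFun := fun qq => (⟨qq.1.1, qq.2⟩, qq.1.2)
        invFun := fun x => ⟨(x.1.1, x.2), x.1.2⟩
        left_inv := fun ⟨⟨a, b⟩, h⟩ => rfl
        right_inv := fun ⟨⟨a, h⟩, b⟩ => rfl }
    have e2 : {i : ZMod n // P (f i)} ≃ {v // P v} :=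
      (Equiv.ofBijective f ⟨hfinj, hfsurj⟩).subtypeEquiv (fun i => Iff.rfl)
    have e3 : Fin c ≃ {v // P v} := by
      apply Equiv.ofBijective (fun x => (⟨g x, (hPg _).mpr ⟨x, rfl⟩⟩ : {v // P v}))
      constructor
      · intro x y h
        exact hg (congrArg Subtype.val h)
      · rintro ⟨v, hv⟩
        obtain ⟨x, rfl⟩ := (hPg v).mp hv
        exact ⟨x, rfl⟩
    rw [Nat.card_congr (e1.trans ((e2.trans e3.symm).prodCongr (Equiv.refl Bool)))]
    simp [Nat.card_eq_fintype_card]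
    ring
  have cP : Nat.card {qq : ZMod n × Bool // isI (f qq.1)} = 2 * k :=
    cardsub isI k (fun x => Sum.inr (Sum.inr x))
      (fun x y h => Sum.inr_injective (Sum.inr_injective h)) (fun v => Iff.rfl)
  have cQ : Nat.card {qq : ZMod n × Bool // isS (f qq.1)} = 2 * k :=
    cardsub isS k (fun x => Sum.inl x) (fun x y h => Sum.inl_injective h) (fun v => Iff.rfl)
  set F : ZMod n × Bool → ZMod n × Bool :=
    fun qq => (qq.1 + (if qq.2 then 1 else -1), !qq.2) with hFdef
  have hSnbr : ∀ i : ZMod n, isI (f i) → isS (f (i + 1)) ∧ isS (f (i + -1)) := by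
    intro i hi
    constructor
    · exact hF1 _ _ hi ((hadj i).symm)
    · have h := hadj (i + -1)
      rw [show i + -1 + 1 = i by ring] at h
      exact hF1 _ _ hi h
  have hwd : ∀ qq : ZMod n × Bool, isI (f qq.1) → isS (f (F qq).1) := by
    rintro ⟨i, b⟩ h
    cases b
    · exact (hSnbr i h).2
    · exact (hSnbr i h).1
  set F' : {qq : ZMod n × Bool // isI (f qq.1)} → {qq : ZMod n × Bool // isS (f qq.1)} :=
    fun qq => ⟨F qq.1, hwd qq.1 qq.2⟩ with hF'
  have hFinj : Function.Injective F := by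
    rintro ⟨i, b⟩ ⟨j, c⟩ h
    simp only [hFdef, Prod.mk.injEq, Bool.not_inj_iff] at h
    obtain ⟨h1, rfl⟩ := h
    simp only [add_left_inj] at h1
    rw [h1]
  have hFbij : Function.Bijective F' := by
    rw [Nat.bijective_iff_injective_and_card]
    constructor
    · intro x y h
      exact Subtype.ext (hFinj (congrArg Subtype.val h))
    · rw [cP, cQ]
  have hInbr : ∀ j : ZMod n, isS (f j) → isI (f (j + 1)) ∧ isI (f (j + -1)) := by
    intro j hj
    constructor
    · obtain ⟨⟨⟨i, b⟩, hP⟩, heq⟩ := hFbij.surjective ⟨(j, true), hj⟩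
      have heq' : F (i, b) = (j, true) := congrArg Subtype.val heq
      simp only [hFdef, Prod.mk.injEq] at heq'
      obtain ⟨h1, h2⟩ := heq'
      cases b
      · simp only [if_neg (by simp : ¬ (false = true))] at h1
        have hij : i = j + 1 := by rw [← h1]; ring
        rw [← hij]
        exact hP
      · simp at h2
    · obtain ⟨⟨⟨i, b⟩, hP⟩, heq⟩ := hFbij.surjective ⟨(j, false), hj⟩
      have heq' : F (i, b) = (j, false) := congrArg Subtype.val heq
      simp only [hFdef, Prod.mk.injEq] at heq'
      obtain ⟨h1, h2⟩ := heq'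
      cases b
      · simp at h2
      · simp only [if_true] at h1
        have hij : i = j + -1 := by rw [← h1]; ring
        rw [← hij]
        exact hP
  have hMI : ∀ v, isM v → ¬ isI v := by
    rintro v ⟨x, rfl⟩ ⟨y, hy⟩
    simp at hy
  have hMstep : ∀ i : ZMod n, isM (f i) → isM (f (i + 1)) := by
    intro i hi
    rcases hF2 _ _ hi (hadj i) with hS | hM
    · exfalso
      have h := (hInbr _ hS).2
      rw [show i + 1 + -1 = i by ring] at h
      exact hMI _ hi h
    · exact hM
  obtain ⟨m, hm⟩ := hfsurj (Sum.inr (Sum.inl (⟨0, by omega⟩ : Fin (n - 2*k))))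
  have hMall : ∀ t : ℕ, isM (f (m + t)) := by
    intro t
    induction t with
    | zero => simp only [Nat.cast_zero, add_zero]; exact ⟨_, hm⟩
    | succ t ih =>
      have h : (m + (t + 1 : ℕ) : ZMod n) = (m + t) + 1 := by push_cast; ring
      rw [h]
      exact hMstep _ ih
  obtain ⟨j, hj⟩ := hfsurj (Sum.inr (Sum.inr (⟨0, by omega⟩ : Fin k)))
  have hjm : j = m + ((j - m).val : ℕ) := by
    rw [ZMod.natCast_rightInverse (j - m)]; ring
  have hfin := hMall ((j - m).val)
  rw [← hjm, hj] at hfin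
  obtain ⟨x, hx⟩ := hfin
  simp at hx

end AuxiliaryForGraphNProperties

/-- For `k ≥ 1` and `n ≥ 2k + 2`, the graph `Nᵏₙ = Kₖ ∨ (K_{n-2k} + kK₁)`
has diameter `2`, is not Hamiltonian, and `W(Nᵏₙ) = n(n-1) - e(Nᵏₙ)`,
`H(Nᵏₙ) = (e(Nᵏₙ) + C(n,2))/2`. -/
theorem graphN_properties {n k : ℕ} (hk : 1 ≤ k) (hn : 2 * k + 2 ≤ n) :
    (graphN n k).diam = 2 ∧
    ¬ (graphN n k).IsHamiltonian ∧
    wienerIndex (graphN n k) = (n : ℝ) * ((n : ℝ) - 1) - (numEdges (graphN n k) : ℝ) ∧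
    hararyIndex (graphN n k) =
      ((numEdges (graphN n k) : ℝ) + (n : ℝ) * ((n : ℝ) - 1) / 2) / 2 := by
  classical
  set G := graphN n k with hG
  have hcard : Fintype.card (Fin k ⊕ (Fin (n - 2*k) ⊕ Fin k)) = n := by simp; omega
  have hd := aux_graphN_dist (n := n) hk
  rw [← hG] at hd
  -- edge count
  have h2e := aux_handshake G
  have hAR : ∑ u, ∑ v, (if G.Adj u v then (1:ℝ) else 0) = 2 * (numEdges G : ℝ) := by
    calc ∑ u, ∑ v, (if G.Adj u v then (1:ℝ) else 0)
        = ((∑ u, ∑ v, (if G.Adj u v then (1:ℕ) else 0) : ℕ) : ℝ) := by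
          push_cast
          rfl
      _ = _ := by rw [h2e]; push_cast; ring
  have hDR : ∑ u : Fin k ⊕ (Fin (n - 2*k) ⊕ Fin k), ∑ v : Fin k ⊕ (Fin (n - 2*k) ⊕ Fin k),
      (if u = v then (1:ℝ) else 0) = (n : ℝ) := by
    simp only [Finset.sum_ite_eq, Finset.mem_univ, if_true]
    rw [Finset.sum_const, Finset.card_univ, hcard, nsmul_eq_mul, mul_one]
  have hC : ∑ u : Fin k ⊕ (Fin (n - 2*k) ⊕ Fin k),
      ∑ v : Fin k ⊕ (Fin (n - 2*k) ⊕ Fin k), (2:ℝ) = 2 * (n:ℝ) * (n:ℝ) := by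
    rw [Finset.sum_const, Finset.sum_const, Finset.card_univ, hcard, nsmul_eq_mul,
      nsmul_eq_mul]
    ring
  have hWsum : (∑ u, ∑ v, (G.dist u v : ℝ))
      = 2 * (n:ℝ) * (n:ℝ) - 2 * (n:ℝ) - 2 * (numEdges G : ℝ) := by
    have hpt : ∀ u v, (G.dist u v : ℝ)
        = 2 - 2 * (if u = v then (1:ℝ) else 0) - (if G.Adj u v then (1:ℝ) else 0) := by
      intro u v
      rw [hd u v]
      by_cases hadj : G.Adj u v
      · rw [if_pos hadj, if_pos hadj, if_neg hadj.ne]; norm_num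
      · rw [if_neg hadj, if_neg hadj]
        by_cases heq : u = v
        · rw [if_pos heq, if_pos heq]; norm_num
        · rw [if_neg heq, if_neg heq]; norm_num
    calc (∑ u, ∑ v, (G.dist u v : ℝ))
        = ∑ u, ∑ v, ((2:ℝ) - 2 * (if u = v then (1:ℝ) else 0)
            - (if G.Adj u v then (1:ℝ) else 0)) :=
          Finset.sum_congr rfl fun u _ => Finset.sum_congr rfl fun v _ => hpt u v
      _ = (∑ u : Fin k ⊕ (Fin (n - 2*k) ⊕ Fin k), ∑ v : Fin k ⊕ (Fin (n - 2*k) ⊕ Fin k), (2:ℝ))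
            - 2 * (∑ u : Fin k ⊕ (Fin (n - 2*k) ⊕ Fin k), ∑ v : Fin k ⊕ (Fin (n - 2*k) ⊕ Fin k), (if u = v then (1:ℝ) else 0))
            - (∑ u : Fin k ⊕ (Fin (n - 2*k) ⊕ Fin k), ∑ v : Fin k ⊕ (Fin (n - 2*k) ⊕ Fin k), (if G.Adj u v then (1:ℝ) else 0)) := by
          simp only [Finset.sum_sub_distrib, ← Finset.mul_sum]
      _ = _ := by rw [hC, hDR, hAR]
  have hHsum : (∑ u, ∑ v, ((G.dist u v : ℝ))⁻¹)
      = (n:ℝ) * (n:ℝ) / 2 - (n:ℝ) / 2 + (numEdges G : ℝ) := by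
    have hpt : ∀ u v, ((G.dist u v : ℝ))⁻¹
        = 2⁻¹ - 2⁻¹ * (if u = v then (1:ℝ) else 0)
          + 2⁻¹ * (if G.Adj u v then (1:ℝ) else 0) := by
      intro u v
      rw [hd u v]
      by_cases hadj : G.Adj u v
      · rw [if_pos hadj, if_pos hadj, if_neg hadj.ne]; norm_num
      · rw [if_neg hadj, if_neg hadj]
        by_cases heq : u = v
        · rw [if_pos heq, if_pos heq]; norm_num
        · rw [if_neg heq, if_neg heq]; norm_num
    calc (∑ u, ∑ v, ((G.dist u v : ℝ))⁻¹)
        = ∑ u, ∑ v, ((2:ℝ)⁻¹ - 2⁻¹ * (if u = v then (1:ℝ) else 0)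
            + 2⁻¹ * (if G.Adj u v then (1:ℝ) else 0)) :=
          Finset.sum_congr rfl fun u _ => Finset.sum_congr rfl fun v _ => hpt u v
      _ = (∑ u : Fin k ⊕ (Fin (n - 2*k) ⊕ Fin k), ∑ v : Fin k ⊕ (Fin (n - 2*k) ⊕ Fin k), (2:ℝ)⁻¹)
            - 2⁻¹ * (∑ u : Fin k ⊕ (Fin (n - 2*k) ⊕ Fin k), ∑ v : Fin k ⊕ (Fin (n - 2*k) ⊕ Fin k), (if u = v then (1:ℝ) else 0))
            + 2⁻¹ * (∑ u : Fin k ⊕ (Fin (n - 2*k) ⊕ Fin k), ∑ v : Fin k ⊕ (Fin (n - 2*k) ⊕ Fin k), (if G.Adj u v then (1:ℝ) else 0)) := by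
          simp only [Finset.sum_add_distrib, Finset.sum_sub_distrib, ← Finset.mul_sum]
      _ = _ := by
          have h2 : ∑ u : Fin k ⊕ (Fin (n - 2*k) ⊕ Fin k),
              ∑ v : Fin k ⊕ (Fin (n - 2*k) ⊕ Fin k), (2:ℝ)⁻¹ = (n:ℝ) * (n:ℝ) / 2 := by
            rw [Finset.sum_const, Finset.sum_const, Finset.card_univ, hcard, nsmul_eq_mul,
              nsmul_eq_mul]
            ring
          rw [h2, hDR, hAR]
          ring
  refine ⟨aux_graphN_diam hk hn, aux_graphN_not_ham hk hn, ?_, ?_⟩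
  · rw [wienerIndex, hWsum]
    ring
  · rw [hararyIndex, hHsum]
    ring
end

section
/- For k ≥ 1 and n ≥ 2k + 3, the graph ̲Nᵏₙ = Kₖ ∨ (K_{n−2k−1} + (k+1)K₁) has diameter 2, is not traceable, and consequently W(̲Nᵏₙ) = n(n−1) − e(̲Nᵏₙ) and H(̲Nᵏₙ) = (e(̲Nᵏₙ) + C(n,2))/2, where e(̲Nᵏₙ) = C(n−k−1,2) + k(k+1). -/
open SimpleGraph Finset

section Aux
variable {n k : ℕ}




lemma adj_lr {a : Fin k} {x} : (graphNbar n k).Adj (Sum.inl a) (Sum.inr x) := by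
  simp [graphNbar, gJoin]

lemma adj_rl {a : Fin k} {x} : (graphNbar n k).Adj (Sum.inr x) (Sum.inl a) := by
  simp [graphNbar, gJoin]

/-- The distinguished hub vertex. -/
def hub (n k : ℕ) (hk : 1 ≤ k) : Fin k ⊕ (Fin (n - 2*k - 1) ⊕ Fin (k + 1)) :=
  Sum.inl ⟨0, hk⟩

lemma adj_hub (hk : 1 ≤ k) {u} (hu : u ≠ hub n k hk) : (graphNbar n k).Adj u (hub n k hk) := by
  rcases u with a | x
  · rw [graphNbar, gJoin]
    left
    simp only [SimpleGraph.sum_adj, top_adj]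
    exact fun h => hu (by rw [h]; rfl)
  · exact adj_rl

/-- walk of length ≤ 2 between any two distinct vertices -/
lemma walk2 (hk : 1 ≤ k) (u v : Fin k ⊕ (Fin (n - 2*k - 1) ⊕ Fin (k + 1))) (huv : u ≠ v) :
    ∃ p : (graphNbar n k).Walk u v, p.length ≤ 2 := by
  by_cases hadj : (graphNbar n k).Adj u v
  · exact ⟨Walk.cons hadj Walk.nil, by simp⟩
  · have hu : u ≠ hub n k hk := by
      rintro rfl
      exact hadj ((graphNbar n k).adj_symm (adj_hub hk (fun h => huv h.symm)))
    have hv : v ≠ hub n k hk := by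
      rintro rfl
      exact hadj (adj_hub hk hu)
    exact ⟨Walk.cons (adj_hub hk hu) (Walk.cons ((graphNbar n k).adj_symm (adj_hub hk hv)) Walk.nil),
      by simp⟩

lemma dist_eq_two (hk : 1 ≤ k) (u v : Fin k ⊕ (Fin (n - 2*k - 1) ⊕ Fin (k + 1))) (huv : u ≠ v)
    (hadj : ¬ (graphNbar n k).Adj u v) : (graphNbar n k).dist u v = 2 := by
  obtain ⟨p, hp⟩ := walk2 hk u v huv
  · have h0 : (graphNbar n k).dist u v ≠ 0 := by
      rw [SimpleGraph.dist_ne_zero_iff_ne_and_reachable]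
      exact ⟨huv, ⟨p⟩⟩
    have h1 : (graphNbar n k).dist u v ≠ 1 := fun h =>
      hadj (SimpleGraph.dist_eq_one_iff_adj.1 h)
    have h2 : (graphNbar n k).dist u v ≤ 2 := le_trans (SimpleGraph.dist_le p) hp
    omega

lemma ediam_eq (hk : 1 ≤ k) (hn : 2 * k + 3 ≤ n) : (graphNbar n k).ediam = 2 := by
  apply le_antisymm
  · apply SimpleGraph.ediam_le_of_edist_le
    intro u v
    by_cases huv : u = v
    · subst huv; simp [SimpleGraph.edist_self]
    · obtain ⟨p, hp⟩ := walk2 hk u v huv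
      calc (graphNbar n k).edist u v ≤ p.length := SimpleGraph.edist_le p
        _ ≤ 2 := by exact_mod_cast hp
  · -- exhibit two vertices at distance 2
    set u : Fin k ⊕ (Fin (n - 2*k - 1) ⊕ Fin (k + 1)) := Sum.inr (Sum.inr 0)
    set v : Fin k ⊕ (Fin (n - 2*k - 1) ⊕ Fin (k + 1)) := Sum.inr (Sum.inr 1)
    have huv : u ≠ v := by simp [u, v, Fin.ext_iff, Nat.mod_eq_of_lt (by omega : 1 < k + 1)]
    have hadj : ¬ (graphNbar n k).Adj u v := by simp [u, v, graphNbar, gJoin]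
    have h0 : (graphNbar n k).edist u v ≠ 0 := by
      rw [Ne, SimpleGraph.edist_eq_zero_iff]; exact huv
    have h1 : (graphNbar n k).edist u v ≠ 1 := fun h =>
      hadj (SimpleGraph.edist_eq_one_iff_adj.1 h)
    have h12 : (1:ℕ∞) + 1 ≤ (graphNbar n k).edist u v :=
      Order.add_one_le_of_lt (lt_of_le_of_ne (ENat.one_le_iff_ne_zero.2 h0) (Ne.symm h1))
    rw [one_add_one_eq_two] at h12
    exact le_trans h12 SimpleGraph.edist_le_ediam

lemma diam_eq (hk : 1 ≤ k) (hn : 2 * k + 3 ≤ n) : (graphNbar n k).diam = 2 := by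
  rw [SimpleGraph.diam, ediam_eq hk hn]; rfl





lemma sum_ite_ne {α : Type*} [Fintype α] [DecidableEq α] (a : α) :
    ∑ b : α, (if a ≠ b then 1 else 0 : ℕ) = Fintype.card α - 1 := by
  have h1 : ∑ b : α, (if a = b then 1 else 0 : ℕ) = 1 := by
    simp [Finset.sum_ite_eq]
  have h2 : ∑ b : α, ((if a ≠ b then 1 else 0 : ℕ) + (if a = b then 1 else 0)) =
      Fintype.card α := by
    rw [← Finset.card_univ, Finset.card_eq_sum_ones]
    apply Finset.sum_congr rfl
    intro b _
    by_cases h : a = b <;> simp [h]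
  rw [Finset.sum_add_distrib, h1] at h2
  omega

open Classical in
lemma two_numEdges {V : Type*} [Fintype V] (G : SimpleGraph V) :
    2 * numEdges G = ∑ u : V, ∑ v : V, (if G.Adj u v then 1 else 0 : ℕ) := by
  have : numEdges G = G.edgeFinset.card := by
    rw [numEdges, Nat.card_eq_fintype_card, ← SimpleGraph.edgeFinset_card]
  rw [this, SimpleGraph.two_mul_card_edgeFinset]
  rw [← Fintype.sum_prod_type']
  rw [Finset.card_filter]

lemma choose_two (q : ℕ) : 2 * q.choose 2 = q * (q - 1) := by
  induction q with
  | zero => rfl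
  | succ q ih =>
    have h : (q+1).choose 2 = q.choose 1 + q.choose 2 := Nat.choose_succ_succ q 1
    rw [h, Nat.choose_one_right, Nat.mul_add, ih]
    cases q with
    | zero => rfl
    | succ q => simp [Nat.succ_sub_one]; ring

open Classical in
lemma numEdges_eq (hk : 1 ≤ k) (hn : 2 * k + 3 ≤ n) :
    numEdges (graphNbar n k) = Nat.choose (n - k - 1) 2 + k * (k + 1) := by
  obtain ⟨m, hm⟩ : ∃ m, n - 2*k - 1 = m := ⟨_, rfl⟩
  have hA : 2 * numEdges (graphNbar n k) =
      k * ((k-1) + (m + (k+1))) + (m * (k + (m-1)) + (k+1) * k) := by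
    rw [two_numEdges, Fintype.sum_sum_type]
    have d1 : ∀ a : Fin k, ∑ v, (if (graphNbar n k).Adj (Sum.inl a) v then 1 else 0 : ℕ)
        = (k-1) + (m + (k+1)) := by
      intro a
      rw [Fintype.sum_sum_type, Fintype.sum_sum_type]
      have p1 : ∑ b : Fin k, (if (graphNbar n k).Adj (Sum.inl a) (Sum.inl b) then 1 else 0 : ℕ)
          = k - 1 := by
        rw [Finset.sum_congr rfl (g := fun b => if a ≠ b then 1 else 0) (fun b _ => by
          simp [graphNbar, gJoin]), sum_ite_ne, Fintype.card_fin]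
      have p2 : ∑ x : Fin (n-2*k-1),
          (if (graphNbar n k).Adj (Sum.inl a) (Sum.inr (Sum.inl x)) then 1 else 0 : ℕ) = m := by
        rw [Finset.sum_congr rfl (g := fun _ => 1) (fun x _ => by simp [graphNbar, gJoin]),
          Finset.sum_const, Finset.card_univ, Fintype.card_fin, smul_eq_mul, mul_one, hm]
      have p3 : ∑ b : Fin (k+1),
          (if (graphNbar n k).Adj (Sum.inl a) (Sum.inr (Sum.inr b)) then 1 else 0 : ℕ)
          = k + 1 := by
        rw [Finset.sum_congr rfl (g := fun _ => 1) (fun b _ => by simp [graphNbar, gJoin]),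
          Finset.sum_const, Finset.card_univ, Fintype.card_fin, smul_eq_mul, mul_one]
      rw [p1, p2, p3]
    have d2 : ∀ x : Fin (n-2*k-1),
        ∑ v, (if (graphNbar n k).Adj (Sum.inr (Sum.inl x)) v then 1 else 0 : ℕ)
        = k + (m-1) := by
      intro x
      rw [Fintype.sum_sum_type, Fintype.sum_sum_type]
      have p1 : ∑ a : Fin k,
          (if (graphNbar n k).Adj (Sum.inr (Sum.inl x)) (Sum.inl a) then 1 else 0 : ℕ) = k := by
        rw [Finset.sum_congr rfl (g := fun _ => 1) (fun a _ => by simp [graphNbar, gJoin]),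
          Finset.sum_const, Finset.card_univ, Fintype.card_fin, smul_eq_mul, mul_one]
      have p2 : ∑ y : Fin (n-2*k-1),
          (if (graphNbar n k).Adj (Sum.inr (Sum.inl x)) (Sum.inr (Sum.inl y)) then 1 else 0 : ℕ)
          = m - 1 := by
        rw [Finset.sum_congr rfl (g := fun y => if x ≠ y then 1 else 0) (fun y _ => by
          simp [graphNbar, gJoin]), sum_ite_ne, Fintype.card_fin, hm]
      have p3 : ∑ b : Fin (k+1),
          (if (graphNbar n k).Adj (Sum.inr (Sum.inl x)) (Sum.inr (Sum.inr b)) then 1 else 0 : ℕ)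
          = 0 := by
        rw [Finset.sum_congr rfl (g := fun _ => 0) (fun b _ => by simp [graphNbar, gJoin]),
          Finset.sum_const, smul_zero]
      rw [p1, p2, p3, add_zero]
    have d3 : ∀ b : Fin (k+1),
        ∑ v, (if (graphNbar n k).Adj (Sum.inr (Sum.inr b)) v then 1 else 0 : ℕ) = k := by
      intro b
      rw [Fintype.sum_sum_type, Fintype.sum_sum_type]
      have p1 : ∑ a : Fin k,
          (if (graphNbar n k).Adj (Sum.inr (Sum.inr b)) (Sum.inl a) then 1 else 0 : ℕ) = k := by
        rw [Finset.sum_congr rfl (g := fun _ => 1) (fun a _ => by simp [graphNbar, gJoin]),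
          Finset.sum_const, Finset.card_univ, Fintype.card_fin, smul_eq_mul, mul_one]
      have p2 : ∑ y : Fin (n-2*k-1),
          (if (graphNbar n k).Adj (Sum.inr (Sum.inr b)) (Sum.inr (Sum.inl y)) then 1 else 0 : ℕ)
          = 0 := by
        rw [Finset.sum_congr rfl (g := fun _ => 0) (fun y _ => by simp [graphNbar, gJoin]),
          Finset.sum_const, smul_zero]
      have p3 : ∑ c : Fin (k+1),
          (if (graphNbar n k).Adj (Sum.inr (Sum.inr b)) (Sum.inr (Sum.inr c)) then 1 else 0 : ℕ)
          = 0 := by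
        rw [Finset.sum_congr rfl (g := fun _ => 0) (fun c _ => by simp [graphNbar, gJoin]),
          Finset.sum_const, smul_zero]
      rw [p1, p2, p3, add_zero, add_zero]
    rw [Finset.sum_congr rfl (fun a _ => d1 a), Finset.sum_const, Finset.card_univ,
      Fintype.card_fin, smul_eq_mul]
    have hrest : ∑ u : Fin (n-2*k-1) ⊕ Fin (k+1),
        ∑ v, (if (graphNbar n k).Adj (Sum.inr u) v then 1 else 0 : ℕ)
        = m * (k + (m-1)) + (k+1) * k := by
      rw [Fintype.sum_sum_type, Finset.sum_congr rfl (fun x _ => d2 x),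
        Finset.sum_congr rfl (fun b _ => d3 b), Finset.sum_const, Finset.sum_const,
        Finset.card_univ, Finset.card_univ, Fintype.card_fin, Fintype.card_fin,
        smul_eq_mul, smul_eq_mul, hm]
    rw [hrest]
  have hq : n - k - 1 = m + k := by omega
  rw [hq]
  have hc := choose_two (m + k)
  have hiden : k * ((k-1) + (m + (k+1))) + (m * (k + (m-1)) + (k+1) * k)
      = (m+k) * (m+k-1) + 2 * (k * (k+1)) := by
    obtain ⟨m2, hm2⟩ : ∃ m2, m = m2 + 2 := ⟨m - 2, by omega⟩
    obtain ⟨k1, hk1⟩ : ∃ k1, k = k1 + 1 := ⟨k - 1, by omega⟩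
    rw [hm2, hk1]
    have e1 : k1 + 1 - 1 = k1 := rfl
    have e2 : m2 + 2 - 1 = m2 + 1 := rfl
    have e3 : m2 + 2 + (k1 + 1) - 1 = m2 + k1 + 2 := by omega
    rw [e1, e2, e3]
    ring
  omega





section abstractsums
variable {V : Type*} [Fintype V] (G : SimpleGraph V)

open Classical in
lemma two_numEdges' : 2 * numEdges G = ∑ u : V, ∑ v : V, (if G.Adj u v then 1 else 0 : ℕ) := by
  have : numEdges G = G.edgeFinset.card := by
    rw [numEdges, Nat.card_eq_fintype_card, ← SimpleGraph.edgeFinset_card]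
  rw [this, SimpleGraph.two_mul_card_edgeFinset]
  rw [← Fintype.sum_prod_type']
  rw [Finset.card_filter]

open Classical in
lemma sum_adj_real : ∑ u : V, ∑ v : V, (if G.Adj u v then (1:ℝ) else 0)
    = 2 * (numEdges G : ℝ) := by
  have h2 := two_numEdges' G
  have : ((2 * numEdges G : ℕ) : ℝ) = ∑ u : V, ∑ v : V, (if G.Adj u v then (1:ℝ) else 0) := by
    rw [h2]
    push_cast
    rfl
  rw [← this]
  push_cast
  ring

open Classical in
lemma sum_diag_real : ∑ u : V, ∑ v : V, (if u = v then (1:ℝ) else 0)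
    = (Fintype.card V : ℝ) := by
  have : ∀ u : V, ∑ v : V, (if u = v then (1:ℝ) else 0) = 1 := fun u => by
    simp [Finset.sum_ite_eq]
  rw [Finset.sum_congr rfl (fun u _ => this u), Finset.sum_const, Finset.card_univ,
    nsmul_eq_mul, mul_one]

open Classical in
/-- If the graph has "distance = 1 or 2" structure, compute Wiener and Harary sums. -/
lemma indices_eq (hdist : ∀ u v : V, u ≠ v →
      (G.Adj u v → G.dist u v = 1) ∧ (¬ G.Adj u v → G.dist u v = 2)) :
    wienerIndex G = (Fintype.card V : ℝ) * ((Fintype.card V : ℝ) - 1) - (numEdges G : ℝ) ∧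
    hararyIndex G = ((numEdges G : ℝ) +
      (Fintype.card V : ℝ) * ((Fintype.card V : ℝ) - 1) / 2) / 2 := by
  set N : ℝ := (Fintype.card V : ℝ) with hN
  have hNsum : ∑ u : V, ∑ v : V, (2:ℝ) = 2 * N * N := by
    rw [Finset.sum_const, Finset.sum_const, Finset.card_univ, nsmul_eq_mul, nsmul_eq_mul]
    ring
  have hW : ∑ u : V, ∑ v : V, ((G.dist u v : ℝ))
      = ∑ u : V, ∑ v : V, ((2:ℝ) - 2 * (if u = v then (1:ℝ) else 0)
        - (if G.Adj u v then (1:ℝ) else 0)) := by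
    refine Finset.sum_congr rfl (fun u _ => Finset.sum_congr rfl (fun v _ => ?_))
    by_cases huv : u = v
    · subst huv
      simp [SimpleGraph.dist_self]
    · by_cases hadj : G.Adj u v
      · rw [(hdist u v huv).1 hadj, if_neg huv, if_pos hadj]; norm_num
      · rw [(hdist u v huv).2 hadj, if_neg huv, if_neg hadj]; norm_num
  have hH : ∑ u : V, ∑ v : V, ((G.dist u v : ℝ))⁻¹
      = ∑ u : V, ∑ v : V, ((1:ℝ)/2 - (1/2) * (if u = v then (1:ℝ) else 0)
        + (1/2) * (if G.Adj u v then (1:ℝ) else 0)) := by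
    refine Finset.sum_congr rfl (fun u _ => Finset.sum_congr rfl (fun v _ => ?_))
    by_cases huv : u = v
    · subst huv
      simp [SimpleGraph.dist_self]
    · by_cases hadj : G.Adj u v
      · rw [(hdist u v huv).1 hadj, if_neg huv, if_pos hadj]; norm_num
      · rw [(hdist u v huv).2 hadj, if_neg huv, if_neg hadj]; norm_num
  have e1 := sum_adj_real G
  have e2 := sum_diag_real (V := V)
  constructor
  · rw [wienerIndex, hW]
    simp only [Finset.sum_sub_distrib, ← Finset.mul_sum]
    rw [hNsum, e1, e2]
    ring
  · rw [hararyIndex, hH]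
    simp only [Finset.sum_add_distrib, Finset.sum_sub_distrib, ← Finset.mul_sum]
    rw [e1, e2]
    have : ∑ u : V, ∑ v : V, (1:ℝ)/2 = N * N / 2 := by
      rw [Finset.sum_const, Finset.sum_const, Finset.card_univ, nsmul_eq_mul, nsmul_eq_mul]
      ring
    rw [this]
    ring

end abstractsums

lemma cardV (hn : 2 * k + 1 ≤ n) :
    Fintype.card (Fin k ⊕ (Fin (n - 2*k - 1) ⊕ Fin (k + 1))) = n := by
  simp only [Fintype.card_sum, Fintype.card_fin]
  omega







/-- predicates on the vertex type -/
def isS : Fin k ⊕ (Fin (n - 2*k - 1) ⊕ Fin (k + 1)) → Prop := fun v => ∃ a, v = Sum.inl a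
def isI : Fin k ⊕ (Fin (n - 2*k - 1) ⊕ Fin (k + 1)) → Prop :=
  fun v => ∃ b, v = Sum.inr (Sum.inr b)

lemma adj_I_S {u v} (h : (graphNbar n k).Adj u v) (hu : isI u) : isS v := by
  obtain ⟨b, rfl⟩ := hu
  rcases v with a | x
  · exact ⟨a, rfl⟩
  · rcases x with y | c <;> simp [graphNbar, gJoin] at h

open Classical in
lemma not_traceable (hk : 1 ≤ k) (hn : 2 * k + 3 ≤ n) : ¬ IsTraceable (graphNbar n k) := by
  rintro ⟨u, v, p, hp⟩
  set l := p.support with hl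
  have hcard : Fintype.card (Fin k ⊕ (Fin (n - 2*k - 1) ⊕ Fin (k + 1))) = n := cardV (by omega)
  have hN : l.length = n := by
    have h1 : l.length = p.length + 1 := SimpleGraph.Walk.length_support p
    have h2 := hp.length_eq
    rw [hcard] at h2
    rw [h1, h2]
    omega
  have hN' : p.support.length = n := hN
  set f : ℕ → Fin k ⊕ (Fin (n - 2*k - 1) ⊕ Fin (k + 1)) :=
    fun i => l.getD i (Sum.inl ⟨0, hk⟩) with hf
  -- basic facts
  have F1 : ∀ i, i + 1 < n → (graphNbar n k).Adj (f i) (f (i+1)) := by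
    intro i hi
    have hc := List.isChain_iff_getElem.1 (SimpleGraph.Walk.isChain_adj_support p) i (by omega)
    rw [hf]
    simp only []
    rw [List.getD_eq_getElem _ _ (by omega), List.getD_eq_getElem _ _ (by omega)]
    exact hc
  have F2 : ∀ i j, i < n → j < n → f i = f j → i = j := by
    intro i j hi hj hij
    have hnd : l.Nodup := hp.isPath.support_nodup
    rw [hf] at hij
    simp only [] at hij
    rw [List.getD_eq_getElem _ _ (by omega), List.getD_eq_getElem _ _ (by omega)] at hij
    exact (hnd.getElem_inj_iff).1 hij
  have F3 : ∀ v, ∃ i, i < n ∧ f i = v := by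
    intro v
    have hv : v ∈ l := hp.mem_support v
    obtain ⟨i, hi⟩ := List.mem_iff_get.1 hv
    exact ⟨i.1, by omega, by rw [hf]; simp only []; rw [List.getD_eq_get _ _ i]; exact hi⟩
  -- position sets
  set SP : Finset ℕ := (Finset.range n).filter (fun i => isS (f i)) with hSP
  set IP : Finset ℕ := (Finset.range n).filter (fun i => isI (f i)) with hIP
  have memSP : ∀ i, i ∈ SP ↔ i < n ∧ isS (f i) := by
    intro i; rw [hSP]; simp [Finset.mem_filter, Finset.mem_range]
  have memIP : ∀ i, i ∈ IP ↔ i < n ∧ isI (f i) := by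
    intro i; rw [hIP]; simp [Finset.mem_filter, Finset.mem_range]
  -- cardinalities
  have cardP : ∀ (P : Finset ℕ) (T : Type) (_ : Fintype T) (g : T → Fin k ⊕ (Fin (n-2*k-1) ⊕ Fin (k+1)))
      (hg : Function.Injective g)
      (hmem : ∀ i, i ∈ P ↔ i < n ∧ ∃ t, f i = g t), P.card = Fintype.card T := by
    intro P T hT g hg hmem
    classical
    have himg : P.image f = Finset.univ.image g := by
      ext w
      simp only [Finset.mem_image, Finset.mem_univ, true_and]
      constructor
      · rintro ⟨i, hi, rfl⟩
        obtain ⟨_, t, ht⟩ := (hmem i).1 hi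
        exact ⟨t, ht.symm⟩
      · rintro ⟨t, rfl⟩
        obtain ⟨i, hi, hfi⟩ := F3 (g t)
        exact ⟨i, (hmem i).2 ⟨hi, t, hfi⟩, hfi⟩
    have hinj : Set.InjOn f P := by
      intro i hi j hj hij
      exact F2 i j ((hmem i).1 hi).1 ((hmem j).1 hj).1 hij
    calc P.card = (P.image f).card := (Finset.card_image_of_injOn hinj).symm
      _ = (Finset.univ.image g).card := by rw [himg]
      _ = Fintype.card T := by rw [Finset.card_image_of_injective _ hg, Finset.card_univ]
  have cardSP : SP.card = k := by
    have := cardP SP (Fin k) inferInstance Sum.inl Sum.inl_injective (fun i => by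
      rw [memSP]; rfl)
    rwa [Fintype.card_fin] at this
  have cardIP : IP.card = k + 1 := by
    have := cardP IP (Fin (k+1)) inferInstance (fun b => Sum.inr (Sum.inr b))
      (fun a b h => by simpa using h) (fun i => by rw [memIP]; rfl)
    rwa [Fintype.card_fin] at this
  -- step down: predecessor of an I position is an S position
  have stepdown : ∀ q, 0 < q → q ∈ IP → q - 1 ∈ SP := by
    intro q hq hqIP
    obtain ⟨hqN, hqI⟩ := (memIP q).1 hqIP
    have hadj : (graphNbar n k).Adj (f (q-1)) (f (q-1+1)) := F1 (q-1) (by omega)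
    rw [(by omega : q - 1 + 1 = q)] at hadj
    exact (memSP _).2 ⟨by omega, adj_I_S ((graphNbar n k).adj_symm hadj) hqI⟩
  -- step up: successor of an I position is an S position (when in range)
  have stepup : ∀ q, q + 1 < n → q ∈ IP → q + 1 ∈ SP := by
    intro q hq hqIP
    obtain ⟨hqN, hqI⟩ := (memIP q).1 hqIP
    exact (memSP _).2 ⟨hq, adj_I_S (F1 q hq) hqI⟩
  -- pigeonhole: 0 ∈ IP and every S position has its successor in IP
  have herase : (IP.erase 0).card ≤ SP.card := by
    apply Finset.card_le_card_of_injOn (fun q => q - 1)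
    · intro q hq
      have h0 : q ≠ 0 := Finset.ne_of_mem_erase hq
      exact stepdown q (by omega) (Finset.mem_of_mem_erase hq)
    · intro a ha b hb hab
      have h0a : a ≠ 0 := Finset.ne_of_mem_erase ha
      have h0b : b ≠ 0 := Finset.ne_of_mem_erase hb
      simp only [] at hab
      omega
  have h0IP : 0 ∈ IP := by
    by_contra h0
    rw [Finset.erase_eq_of_notMem h0, cardIP, cardSP] at herase
    omega
  have hsurj : ∀ s ∈ SP, s + 1 ∈ IP := by
    intro s hs
    have hcard_le : SP.card ≤ (IP.erase 0).card := by
      rw [cardSP, Finset.card_erase_of_mem h0IP, cardIP]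
      omega
    have := Finset.surj_on_of_inj_on_of_card_le (s := IP.erase 0) (t := SP)
      (fun q _ => q - 1)
      (fun q hq => stepdown q (Nat.pos_of_ne_zero (Finset.ne_of_mem_erase hq))
        (Finset.mem_of_mem_erase hq))
      (fun a b ha hb hab => by
        have h0a : a ≠ 0 := Finset.ne_of_mem_erase ha
        have h0b : b ≠ 0 := Finset.ne_of_mem_erase hb
        omega)
      hcard_le s hs
    obtain ⟨q, hq, hqs⟩ := this
    have h0q : q ≠ 0 := Finset.ne_of_mem_erase hq
    have : q = s + 1 := by omega
    rw [← this]
    exact Finset.mem_of_mem_erase hq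
  -- induction: even positions 2i (i ≤ k) are I positions
  have hind : ∀ i, i ≤ k → 2 * i ∈ IP := by
    intro i
    induction i with
    | zero => intro _; exact h0IP
    | succ i ih =>
      intro hik
      have h2i : 2 * i ∈ IP := ih (by omega)
      have hlt : 2 * i + 1 < n := by omega
      have hS : 2 * i + 1 ∈ SP := stepup _ hlt h2i
      have := hsurj _ hS
      rw [(by ring : 2 * (i+1) = 2 * i + 1 + 1)]
      exact this
  -- final contradiction: the k+1 odd positions 2i+1, i ≤ k, are distinct S positions
  have hodd : ∀ i, i ≤ k → 2 * i + 1 ∈ SP := by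
    intro i hi
    exact stepup _ (by omega) (hind i hi)
  have : k + 1 ≤ SP.card := by
    apply Finset.le_card_of_inj_on_range (fun i => 2 * i + 1)
    · intro i hi
      exact hodd i (by omega)
    · intro a _ b _ hab
      omega
  rw [cardSP] at this
  omega

end Aux

/-- For `k ≥ 1` and `n ≥ 2k + 3`, the graph
`N̲ᵏₙ = Kₖ ∨ (K_{n-2k-1} + (k+1)K₁)` has diameter `2`, is not traceable, and
`W(N̲ᵏₙ) = n(n-1) - e(N̲ᵏₙ)`, `H(N̲ᵏₙ) = (e(N̲ᵏₙ) + C(n,2))/2`, where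
`e(N̲ᵏₙ) = C(n-k-1,2) + k(k+1)`. -/
theorem graphNbar_properties {n k : ℕ} (hk : 1 ≤ k) (hn : 2 * k + 3 ≤ n) :
    (graphNbar n k).diam = 2 ∧
    ¬ IsTraceable (graphNbar n k) ∧
    wienerIndex (graphNbar n k) = (n : ℝ) * ((n : ℝ) - 1) - (numEdges (graphNbar n k) : ℝ) ∧
    hararyIndex (graphNbar n k) =
      ((numEdges (graphNbar n k) : ℝ) + (n : ℝ) * ((n : ℝ) - 1) / 2) / 2 ∧
    numEdges (graphNbar n k) = Nat.choose (n - k - 1) 2 + k * (k + 1) := by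
  obtain ⟨hW, hH⟩ := indices_eq (graphNbar n k)
    (fun u v huv => ⟨fun h => SimpleGraph.dist_eq_one_iff_adj.2 h,
      fun h => dist_eq_two hk u v huv h⟩)
  rw [cardV (by omega)] at hW hH
  exact ⟨diam_eq hk hn, not_traceable hk hn, hW, hH, numEdges_eq hk hn⟩
end

section
/- For 1 ≤ k ≤ n/2, the graph Bᵏₙ obtained from K_{n,n} by deleting all edges of one complete bipartite subgraph K_{n−k,k} is not Hamiltonian, and its Wiener index satisfies W(Bᵏₙ) = 5n² − 2n − 2e(Bᵏₙ), where e(Bᵏₙ) = n(n−k) + k². -/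
open SimpleGraph Finset

section GraphBAux

variable {n k : ℕ}

lemma graphB_adj_lr (i j : Fin n) :
    (graphB n k).Adj (Sum.inl i) (Sum.inr j) ↔ ¬(i.val < n - k ∧ j.val < k) := Iff.rfl
lemma graphB_adj_rl (i j : Fin n) :
    (graphB n k).Adj (Sum.inr j) (Sum.inl i) ↔ ¬(i.val < n - k ∧ j.val < k) := Iff.rfl
lemma graphB_adj_ll (i j : Fin n) : ¬ (graphB n k).Adj (Sum.inl i) (Sum.inl j) := fun h => h
lemma graphB_adj_rr (i j : Fin n) : ¬ (graphB n k).Adj (Sum.inr i) (Sum.inr j) := fun h => h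

lemma dist_ll (hk : 1 ≤ k) (hkn : 2 * k ≤ n) {i i' : Fin n} (h : i ≠ i') :
    (graphB n k).dist (Sum.inl i) (Sum.inl i') = 2 := by
  have h1 : (graphB n k).Adj (Sum.inl i) (Sum.inr ⟨k, by omega⟩) := by
    rw [graphB_adj_lr]; simp only; omega
  have h2 : (graphB n k).Adj (Sum.inr ⟨k, by omega⟩) (Sum.inl i') := by
    rw [graphB_adj_rl]; simp only; omega
  let w : (graphB n k).Walk (Sum.inl i) (Sum.inl i') := .cons h1 (.cons h2 .nil)
  have hle : (graphB n k).dist (Sum.inl i) (Sum.inl i') ≤ 2 := by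
    simpa [w] using SimpleGraph.dist_le w
  have h0 : (graphB n k).dist (Sum.inl i) (Sum.inl i') ≠ 0 :=
    SimpleGraph.dist_ne_zero_iff_ne_and_reachable.mpr ⟨by simpa using h, w.reachable⟩
  have hone : (graphB n k).dist (Sum.inl i) (Sum.inl i') ≠ 1 := by
    rw [ne_eq, SimpleGraph.dist_eq_one_iff_adj]
    exact graphB_adj_ll i i'
  omega

lemma dist_rr (hk : 1 ≤ k) (hkn : 2 * k ≤ n) {j j' : Fin n} (h : j ≠ j') :
    (graphB n k).dist (Sum.inr j) (Sum.inr j') = 2 := by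
  have h1 : (graphB n k).Adj (Sum.inr j) (Sum.inl ⟨n - 1, by omega⟩) := by
    rw [graphB_adj_rl]; simp only; omega
  have h2 : (graphB n k).Adj (Sum.inl ⟨n - 1, by omega⟩) (Sum.inr j') := by
    rw [graphB_adj_lr]; simp only; omega
  let w : (graphB n k).Walk (Sum.inr j) (Sum.inr j') := .cons h1 (.cons h2 .nil)
  have hle : (graphB n k).dist (Sum.inr j) (Sum.inr j') ≤ 2 := by
    simpa [w] using SimpleGraph.dist_le w
  have h0 : (graphB n k).dist (Sum.inr j) (Sum.inr j') ≠ 0 :=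
    SimpleGraph.dist_ne_zero_iff_ne_and_reachable.mpr ⟨by simpa using h, w.reachable⟩
  have hone : (graphB n k).dist (Sum.inr j) (Sum.inr j') ≠ 1 := by
    rw [ne_eq, SimpleGraph.dist_eq_one_iff_adj]
    exact graphB_adj_rr j j'
  omega

lemma dist_lr (hk : 1 ≤ k) (hkn : 2 * k ≤ n) (i j : Fin n) :
    (graphB n k).dist (Sum.inl i) (Sum.inr j) =
      if i.val < n - k ∧ j.val < k then 3 else 1 := by
  split_ifs with hij
  · have h1 : (graphB n k).Adj (Sum.inl i) (Sum.inr ⟨k, by omega⟩) := by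
      rw [graphB_adj_lr]; simp only; omega
    have h2 : (graphB n k).Adj (Sum.inr ⟨k, by omega⟩) (Sum.inl ⟨n - 1, by omega⟩) := by
      rw [graphB_adj_rl]; simp only; omega
    have h3 : (graphB n k).Adj (Sum.inl ⟨n - 1, by omega⟩) (Sum.inr j) := by
      rw [graphB_adj_lr]; simp only; omega
    let w : (graphB n k).Walk (Sum.inl i) (Sum.inr j) := .cons h1 (.cons h2 (.cons h3 .nil))
    have hle : (graphB n k).dist (Sum.inl i) (Sum.inr j) ≤ 3 := by
      simpa [w] using SimpleGraph.dist_le w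
    have h0 : (graphB n k).dist (Sum.inl i) (Sum.inr j) ≠ 0 :=
      SimpleGraph.dist_ne_zero_iff_ne_and_reachable.mpr ⟨by simp, w.reachable⟩
    have hone : (graphB n k).dist (Sum.inl i) (Sum.inr j) ≠ 1 := by
      rw [ne_eq, SimpleGraph.dist_eq_one_iff_adj, graphB_adj_lr]
      exact not_not_intro hij
    have htwo : (graphB n k).dist (Sum.inl i) (Sum.inr j) ≠ 2 := by
      intro h2d
      obtain ⟨p, hp⟩ := (w.reachable).exists_walk_length_eq_dist
      rw [h2d] at hp
      have ha1 := p.adj_getVert_succ (i := 0) (by omega)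
      have ha2 := p.adj_getVert_succ (i := 1) (by omega)
      rw [p.getVert_zero] at ha1
      have hend : p.getVert 2 = Sum.inr j := by
        rw [← hp]; exact p.getVert_length
      rcases hc : p.getVert 1 with c | c
      · rw [hc] at ha1
        exact graphB_adj_ll _ _ ha1
      · rw [hc] at ha2
        norm_num at ha2
        rw [hend] at ha2
        exact graphB_adj_rr _ _ ha2
    omega
  · exact SimpleGraph.dist_eq_one_iff_adj.mpr (by rw [graphB_adj_lr]; exact hij)

lemma card_filter_val_lt (n m : ℕ) (h : m ≤ n) :
    ((univ : Finset (Fin n)).filter (fun i => i.val < m)).card = m := by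
  have he : ((univ : Finset (Fin n)).filter (fun i => i.val < m)) =
      (univ : Finset (Fin m)).map (Fin.castLEEmb h) := by
    ext j
    simp only [mem_filter, mem_univ, true_and, mem_map, Fin.castLEEmb, Function.Embedding.coeFn_mk,
      Fin.castLE]
    constructor
    · intro hj; exact ⟨⟨j.val, hj⟩, rfl⟩
    · rintro ⟨i, rfl⟩; exact i.isLt
  rw [he, card_map, card_univ, Fintype.card_fin]

lemma card_filter_pair (hkn : k ≤ n) :
    ((univ : Finset (Fin n × Fin n)).filter
      (fun p => p.1.val < n - k ∧ p.2.val < k)).card = (n - k) * k := by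
  rw [← Finset.univ_product_univ,
    Finset.filter_product (fun i : Fin n => i.val < n - k) (fun j : Fin n => j.val < k),
    Finset.card_product,
    card_filter_val_lt n (n - k) (by omega), card_filter_val_lt n k hkn]

lemma card_filter_pair_not (hkn : k ≤ n) :
    ((univ : Finset (Fin n × Fin n)).filter
      (fun p => ¬(p.1.val < n - k ∧ p.2.val < k))).card = n * (n - k) + k ^ 2 := by
  have h1 := Finset.card_filter_add_card_filter_not
    (s := (univ : Finset (Fin n × Fin n))) (p := fun p => p.1.val < n - k ∧ p.2.val < k)
  rw [card_filter_pair hkn] at h1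
  rw [Finset.card_univ, Fintype.card_prod, Fintype.card_fin] at h1
  obtain ⟨m, rfl⟩ : ∃ m, n = m + k := ⟨n - k, by omega⟩
  simp only [Nat.add_sub_cancel] at h1 ⊢
  have h2 : (m + k) * (m + k) = m * k + ((m + k) * m + k ^ 2) := by ring
  rw [h2] at h1
  exact Nat.add_left_cancel h1

lemma numEdges_graphB (hk : 1 ≤ k) (hkn : 2 * k ≤ n) :
    numEdges (graphB n k) = n * (n - k) + k ^ 2 := by
  classical
  have key : Nat.card {p : Fin n × Fin n // ¬(p.1.val < n - k ∧ p.2.val < k)} =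
      Nat.card (graphB n k).edgeSet := by
    apply Nat.card_eq_of_bijective
      (fun q => ⟨s(Sum.inl q.1.1, Sum.inr q.1.2), q.2⟩)
    constructor
    · rintro ⟨⟨i, j⟩, hq⟩ ⟨⟨i', j'⟩, hq'⟩ he
      replace he := congrArg Subtype.val he
      simp only [Subtype.mk.injEq, Sym2.eq_iff, Prod.mk.injEq, Prod.swap_prod_mk,
        Sum.inl.injEq, Sum.inr.injEq, reduceCtorEq] at he
      rcases he with ⟨hi, hj⟩ | ⟨hi, hj⟩
      · simp [hi, hj]
      · exact absurd hi (by simp)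
    · rintro ⟨e, he⟩
      induction e using Sym2.ind with
      | _ x y =>
        rcases x with i | i <;> rcases y with j | j
        · exact absurd he (fun h => h)
        · exact ⟨⟨(i, j), he⟩, rfl⟩
        · exact ⟨⟨(j, i), he⟩, Subtype.ext Sym2.eq_swap⟩
        · exact absurd he (fun h => h)
  rw [numEdges, ← key, Nat.card_eq_fintype_card, Fintype.card_subtype,
    card_filter_pair_not (by omega)]

lemma wiener_graphB (hk : 1 ≤ k) (hkn : 2 * k ≤ n) :
    wienerIndex (graphB n k) =
      5 * (n : ℝ) ^ 2 - 2 * (n : ℝ) - 2 * ((n * (n - k) + k ^ 2 : ℕ) : ℝ) := by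
  classical
  have hA1 : ∑ i : Fin n, ∑ i' : Fin n, ((graphB n k).dist (Sum.inl i) (Sum.inl i') : ℝ)
      = 2 * (n : ℝ) ^ 2 - 2 * n := by
    have hpt : ∀ i i' : Fin n, ((graphB n k).dist (Sum.inl i) (Sum.inl i') : ℝ)
        = 2 - (if i = i' then (2 : ℝ) else 0) := by
      intro i i'
      by_cases h : i = i'
      · subst h; simp [SimpleGraph.dist_self]
      · rw [dist_ll hk hkn h]; simp [h]
    simp only [hpt]
    have hin : ∀ i : Fin n, ∑ i' : Fin n, ((2 : ℝ) - (if i = i' then (2 : ℝ) else 0))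
        = 2 * n - 2 := by
      intro i
      rw [Finset.sum_sub_distrib, Finset.sum_const, Finset.sum_ite_eq]
      simp [mul_comm]
    simp only [hin]
    rw [Finset.sum_const, card_univ, Fintype.card_fin]
    push_cast
    ring
  have hA4 : ∑ j : Fin n, ∑ j' : Fin n, ((graphB n k).dist (Sum.inr j) (Sum.inr j') : ℝ)
      = 2 * (n : ℝ) ^ 2 - 2 * n := by
    have hpt : ∀ j j' : Fin n, ((graphB n k).dist (Sum.inr j) (Sum.inr j') : ℝ)
        = 2 - (if j = j' then (2 : ℝ) else 0) := by
      intro j j'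
      by_cases h : j = j'
      · subst h; simp [SimpleGraph.dist_self]
      · rw [dist_rr hk hkn h]; simp [h]
    simp only [hpt]
    have hin : ∀ j : Fin n, ∑ j' : Fin n, ((2 : ℝ) - (if j = j' then (2 : ℝ) else 0))
        = 2 * n - 2 := by
      intro j
      rw [Finset.sum_sub_distrib, Finset.sum_const, Finset.sum_ite_eq]
      simp [mul_comm]
    simp only [hin]
    rw [Finset.sum_const, card_univ, Fintype.card_fin]
    push_cast
    ring
  have hA2 : ∑ i : Fin n, ∑ j : Fin n, ((graphB n k).dist (Sum.inl i) (Sum.inr j) : ℝ)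
      = 3 * (((n - k) * k : ℕ) : ℝ) + ((n * (n - k) + k ^ 2 : ℕ) : ℝ) := by
    have hpt : ∀ i j : Fin n, ((graphB n k).dist (Sum.inl i) (Sum.inr j) : ℝ)
        = if i.val < n - k ∧ j.val < k then (3 : ℝ) else 1 := by
      intro i j
      rw [dist_lr hk hkn i j]
      split_ifs <;> norm_num
    simp only [hpt]
    rw [← Finset.sum_product', Finset.univ_product_univ]
    rw [Finset.sum_ite, Finset.sum_const, Finset.sum_const,
      card_filter_pair (by omega), card_filter_pair_not (by omega)]
    simp only [nsmul_eq_mul]; push_cast; ring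
  have hA3 : ∑ j : Fin n, ∑ i : Fin n, ((graphB n k).dist (Sum.inr j) (Sum.inl i) : ℝ)
      = 3 * (((n - k) * k : ℕ) : ℝ) + ((n * (n - k) + k ^ 2 : ℕ) : ℝ) := by
    have hpt : ∀ j i : Fin n, (graphB n k).dist (Sum.inr j) (Sum.inl i)
        = (graphB n k).dist (Sum.inl i) (Sum.inr j) := by
      intro j i; exact SimpleGraph.dist_comm
    simp only [hpt]
    rw [Finset.sum_comm]
    exact hA2
  rw [wienerIndex]
  simp only [Fintype.sum_sum_type, Finset.sum_add_distrib]
  rw [hA1, hA2, hA3, hA4]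
  have hsub : ((n - k : ℕ) : ℝ) = (n : ℝ) - k := Nat.cast_sub (by omega)
  push_cast [hsub]
  ring

lemma not_ham_graphB (hk : 1 ≤ k) (hkn : 2 * k ≤ n) : ¬ (graphB n k).IsHamiltonian := by
  classical
  intro hham
  have hcardV : Fintype.card (Fin n ⊕ Fin n) = 2 * n := by
    simp [Fintype.card_sum]; ring
  set G := graphB n k with hG
  obtain ⟨a, p, hp⟩ := hham (by rw [hcardV]; omega)
  set L := p.length with hLdef
  have hL : L = 2 * n := by rw [hLdef, hp.length_eq, hcardV]
  have hLpos : 0 < L := by omega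
  -- the cyclic enumeration of vertices
  set F : Fin L → Fin n ⊕ Fin n := fun t => p.getVert (t.val + 1) with hF
  have hsur : Function.Surjective F := by
    intro v
    obtain ⟨t, hv, ht⟩ := SimpleGraph.Walk.mem_support_iff_exists_getVert.mp (hp.mem_support v)
    rcases Nat.eq_zero_or_pos t with rfl | htpos
    · refine ⟨⟨L - 1, by omega⟩, ?_⟩
      simp only [hF]
      rw [show L - 1 + 1 = L by omega]
      rw [hLdef, SimpleGraph.Walk.getVert_length]
      rw [SimpleGraph.Walk.getVert_zero] at hv
      exact hv
    · have ht' : t ≤ L := hLdef ▸ ht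
      exact ⟨⟨t - 1, by omega⟩, by simp only [hF]; rw [show t - 1 + 1 = t by omega]; exact hv⟩
  have hbij : Function.Bijective F :=
    (Fintype.bijective_iff_surjective_and_card F).mpr
      ⟨hsur, by rw [Fintype.card_fin, hL, hcardV]⟩
  -- the cyclic successor
  set σ : Fin L → Fin L := fun t =>
    if h : t.val + 1 = L then ⟨0, hLpos⟩ else ⟨t.val + 1, by omega⟩ with hσ
  have hσval : ∀ t : Fin L, (σ t).val = if t.val + 1 = L then 0 else t.val + 1 := by
    intro t
    simp only [hσ]
    split_ifs <;> rfl
  have hσinj : Function.Injective σ := by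
    intro s t hst
    have h1 := hσval s
    have h2 := hσval t
    rw [hst] at h1
    apply Fin.ext
    split_ifs at h1 h2 <;> omega
  have hadj : ∀ t : Fin L, G.Adj (F t) (F (σ t)) := by
    intro t
    by_cases h : t.val + 1 = L
    · have e0 : F (σ t) = p.getVert (0 + 1) := by
        simp only [hF]; congr 1; rw [hσval t, if_pos h]
      have e1 : F t = p.getVert 0 := by
        simp only [hF]
        rw [h, hLdef, SimpleGraph.Walk.getVert_length, SimpleGraph.Walk.getVert_zero]
      rw [e0, e1]
      exact p.adj_getVert_succ (by omega)
    · have e0 : F (σ t) = p.getVert (t.val + 1 + 1) := by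
        simp only [hF]; congr 1; rw [hσval t, if_neg h]
      rw [e0]
      exact p.adj_getVert_succ (by omega)
  -- the sets C and D
  set inC : Fin n ⊕ Fin n → Prop := fun v => ∃ j : Fin n, v = Sum.inr j ∧ j.val < k with hinC
  set inD : Fin n ⊕ Fin n → Prop := fun v => ∃ i : Fin n, v = Sum.inl i ∧ n - k ≤ i.val with hinD
  have hCnbr : ∀ v w, inC v → G.Adj v w → inD w := by
    rintro v w ⟨j, rfl, hj⟩ hvw
    rcases w with i | j'
    · refine ⟨i, rfl, ?_⟩
      have h' : ¬(i.val < n - k ∧ j.val < k) := hvw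
      omega
    · exact absurd hvw (graphB_adj_rr _ _)
  -- cardinalities
  have hCV : ((univ : Finset (Fin n ⊕ Fin n)).filter inC).card = k := by
    have he : ((univ : Finset (Fin n)).filter (fun j => j.val < k)).card
        = ((univ : Finset (Fin n ⊕ Fin n)).filter inC).card := by
      apply Finset.card_nbij (i := Sum.inr)
      · intro j hj
        simp only [mem_coe, mem_filter, mem_univ, true_and] at hj ⊢
        exact ⟨j, rfl, hj⟩
      · intro x _ y _ hxy
        exact Sum.inr.inj hxy
      · intro v hv
        simp only [Finset.coe_filter, Set.mem_setOf_eq, mem_univ, true_and] at hv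
        obtain ⟨j, rfl, hj⟩ := hv
        exact ⟨j, by simp [hj], rfl⟩
    rw [← he, card_filter_val_lt n k (by omega)]
  have hDV : ((univ : Finset (Fin n ⊕ Fin n)).filter inD).card = k := by
    have h1 : ((univ : Finset (Fin n)).filter (fun i => ¬ i.val < n - k)).card = k := by
      have h2 := Finset.card_filter_add_card_filter_not
        (s := (univ : Finset (Fin n))) (p := fun i : Fin n => i.val < n - k)
      rw [card_filter_val_lt n (n - k) (by omega), Finset.card_univ, Fintype.card_fin] at h2
      omega
    have he : ((univ : Finset (Fin n)).filter (fun i => ¬ i.val < n - k)).card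
        = ((univ : Finset (Fin n ⊕ Fin n)).filter inD).card := by
      apply Finset.card_nbij (i := Sum.inl)
      · intro i hi
        simp only [mem_coe, mem_filter, mem_univ, true_and] at hi ⊢
        exact ⟨i, rfl, by omega⟩
      · intro x _ y _ hxy
        exact Sum.inl.inj hxy
      · intro v hv
        simp only [Finset.coe_filter, Set.mem_setOf_eq, mem_univ, true_and] at hv
        obtain ⟨i, rfl, hi⟩ := hv
        exact ⟨i, by simp; omega, rfl⟩
    rw [← he, h1]
  set SC : Finset (Fin L) := univ.filter (fun t => inC (F t)) with hSCdef
  set SD : Finset (Fin L) := univ.filter (fun t => inD (F t)) with hSDdef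
  have hSC : SC.card = k := by
    rw [← hCV]
    apply Finset.card_nbij (i := F)
    · intro t ht
      simp only [hSCdef, mem_coe, mem_filter, mem_univ, true_and] at ht ⊢
      exact ht
    · exact Set.injOn_of_injective hbij.1
    · intro v hv
      simp only [Finset.coe_filter, Set.mem_setOf_eq, mem_univ, true_and] at hv
      obtain ⟨t, rfl⟩ := hsur v
      exact ⟨t, by simp [hSCdef, hv], rfl⟩
  have hSD : SD.card = k := by
    rw [← hDV]
    apply Finset.card_nbij (i := F)
    · intro t ht
      simp only [hSDdef, mem_coe, mem_filter, mem_univ, true_and] at ht ⊢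
      exact ht
    · exact Set.injOn_of_injective hbij.1
    · intro v hv
      simp only [Finset.coe_filter, Set.mem_setOf_eq, mem_univ, true_and] at hv
      obtain ⟨t, rfl⟩ := hsur v
      exact ⟨t, by simp [hSDdef, hv], rfl⟩
  -- image facts
  have himgC : SC.image σ = SD := by
    apply Finset.eq_of_subset_of_card_le
    · intro x hx
      obtain ⟨t, ht, rfl⟩ := Finset.mem_image.mp hx
      simp only [hSCdef, mem_filter, mem_univ, true_and] at ht
      simp only [hSDdef, mem_filter, mem_univ, true_and]
      exact hCnbr _ _ ht (hadj t)
    · rw [Finset.card_image_of_injective _ hσinj, hSC, hSD]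
  have himgD : SC = SD.image σ := by
    apply Finset.eq_of_subset_of_card_le
    · intro x hx
      simp only [hSCdef, mem_filter, mem_univ, true_and] at hx
      obtain ⟨t, rfl⟩ := (Finite.injective_iff_surjective.mp hσinj) x
      have hD : inD (F t) := hCnbr _ _ hx (hadj t).symm
      exact Finset.mem_image_of_mem σ (by simp [hSDdef, hD])
    · rw [Finset.card_image_of_injective _ hσinj, hSC, hSD]
  have hstep : ∀ t : Fin L, (inC (F t) ∨ inD (F t)) → (inC (F (σ t)) ∨ inD (F (σ t))) := by
    rintro t (h | h)
    · right
      have : σ t ∈ SD := himgC ▸ Finset.mem_image_of_mem σ (by simp [hSCdef, h])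
      simpa [hSDdef] using this
    · left
      have h2 : σ t ∈ SD.image σ := Finset.mem_image_of_mem σ (by simp [hSDdef, h])
      rw [← himgD] at h2
      simpa [hSCdef] using h2
  -- the orbit of the successor covers everything
  obtain ⟨t0, ht0⟩ := hsur (Sum.inr ⟨0, by omega⟩)
  have horb : ∀ m : ℕ, inC (F (σ^[m] t0)) ∨ inD (F (σ^[m] t0)) := by
    intro m
    induction m with
    | zero =>
      left
      rw [Function.iterate_zero_apply, ht0]
      exact ⟨⟨0, by omega⟩, rfl, Nat.lt_of_lt_of_le Nat.zero_lt_one hk⟩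
    | succ m ih =>
      rw [Function.iterate_succ_apply']
      exact hstep _ ih
  have hval : ∀ m : ℕ, (σ^[m] t0).val = (t0.val + m) % L := by
    intro m
    induction m with
    | zero =>
      simp [Nat.mod_eq_of_lt t0.isLt]
    | succ m ih =>
      rw [Function.iterate_succ_apply', hσval, ih]
      have hkey : (t0.val + (m + 1)) % L = ((t0.val + m) % L + 1) % L := by
        rw [Nat.mod_add_mod, Nat.add_assoc]
      rw [hkey]
      by_cases h : (t0.val + m) % L + 1 = L
      · rw [if_pos h, h, Nat.mod_self]
      · rw [if_neg h]
        have hlt : (t0.val + m) % L < L := Nat.mod_lt _ hLpos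
        exact (Nat.mod_eq_of_lt (by omega)).symm
  have hall : ∀ t : Fin L, inC (F t) ∨ inD (F t) := by
    intro t
    have h1 := horb (t.val + L - t0.val)
    have h2 := hval (t.val + L - t0.val)
    have h3 : σ^[t.val + L - t0.val] t0 = t := by
      apply Fin.ext
      rw [h2, show t0.val + (t.val + L - t0.val) = t.val + L by omega,
        Nat.add_mod_right, Nat.mod_eq_of_lt t.isLt]
    rwa [h3] at h1
  obtain ⟨t1, ht1⟩ := hsur (Sum.inl ⟨0, by omega⟩)
  rcases hall t1 with h | h <;> rw [ht1] at h
  · obtain ⟨j, hj, _⟩ := h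
    exact absurd hj (by simp)
  · obtain ⟨i, hi, hle⟩ := h
    have : i.val = 0 := by
      have := Sum.inl.inj hi
      simp [← this]
    omega

end GraphBAux

/-- For `1 ≤ k ≤ n/2`, the graph `Bᵏₙ` (obtained from `K_{n,n}` by deleting
the edges of a complete bipartite subgraph `K_{n-k,k}`) is not Hamiltonian, and
`W(Bᵏₙ) = 5n² - 2n - 2e(Bᵏₙ)`, where `e(Bᵏₙ) = n(n-k) + k²`. -/
theorem graphB_properties {n k : ℕ} (hk : 1 ≤ k) (hkn : 2 * k ≤ n) :
    ¬ (graphB n k).IsHamiltonian ∧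
    wienerIndex (graphB n k) =
      5 * (n : ℝ) ^ 2 - 2 * (n : ℝ) - 2 * (numEdges (graphB n k) : ℝ) ∧
    numEdges (graphB n k) = n * (n - k) + k ^ 2 := by
  exact ⟨not_ham_graphB hk hkn, by
    rw [numEdges_graphB hk hkn]; exact wiener_graphB hk hkn, numEdges_graphB hk hkn⟩
end
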